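/- arXiv:1706.05628 — 3 statements merged into one kernel-verified Lean document; each statement's English description precedes it below -/
import Mathlib

section
/- Let G be a connected graph, u, v ∈ V(G), and let H be the graph obtained from G by attaching a path P_1 of length k+1 from u to a new vertex u' and a path P_2 of length k+1 from v to a new vertex v', where the internal vertices of P_1 and P_2 are new and disjoint. Then G can be contracted to a path with witness structure in which u and v lie in the two endpoint witness sets using at most k contractions, if and only if H is k-contractible to a path. -/
open SimpleGraph

/-- Contraction of the edge `uv` in `G`: remove `v`, attaching its former
neighbours to `u`. -/
def SimpleGraph.contractEdge {V : Type} (G : SimpleGraph V) (u v : V) :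
    SimpleGraph {x : V // x ≠ v} :=
  SimpleGraph.fromRel (fun a b =>
    G.Adj a.1 b.1 ∨ (a.1 = u ∧ G.Adj v b.1) ∨ (b.1 = u ∧ G.Adj v a.1))

/-- `ContractsIn G H n` : `H` is obtained from `G` by exactly `n` edge contractions. -/
inductive ContractsIn : {V : Type} → SimpleGraph V → {W : Type} → SimpleGraph W → ℕ → Prop
  | iso {V : Type} {G : SimpleGraph V} {W : Type} {H : SimpleGraph W} :
      Nonempty (G ≃g H) → ContractsIn G H 0
  | step {V : Type} {G : SimpleGraph V} (u v : V) (huv : G.Adj u v)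
      {W : Type} {H : SimpleGraph W} {n : ℕ} :
      ContractsIn (G.contractEdge u v) H n → ContractsIn G H (n + 1)

/-- `G` is contractible to `H`. -/
def ContractibleTo {V W : Type} (G : SimpleGraph V) (H : SimpleGraph W) : Prop :=
  ∃ n, ContractsIn G H n

/-- `G` is `k`-contractible to `H` : `H` arises from `G` by at most `k` edge contractions. -/
def KContractible {V W : Type} (G : SimpleGraph V) (H : SimpleGraph W) (k : ℕ) : Prop :=
  ∃ n ≤ k, ContractsIn G H n

/-- An `H`-witness structure of `G`. -/
structure IsWitnessStructure {V W : Type} (G : SimpleGraph V) (H : SimpleGraph W)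
    (Wit : W → Set V) : Prop where
  connected : ∀ h, (G.induce (Wit h)).Connected
  adj : ∀ h₁ h₂ : W, h₁ ≠ h₂ →
    (H.Adj h₁ h₂ ↔ ∃ a ∈ Wit h₁, ∃ b ∈ Wit h₂, G.Adj a b)
  cover : ∀ v : V, ∃ h, v ∈ Wit h
  disjoint : ∀ h₁ h₂ : W, h₁ ≠ h₂ → Disjoint (Wit h₁) (Wit h₂)

/-- `P` is a path graph. -/
def IsPathGraph {W : Type} (P : SimpleGraph W) : Prop :=
  ∃ n, Nonempty (P ≃g SimpleGraph.pathGraph n)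

/-- `C` is a cycle graph (on at least 3 vertices). -/
def IsCycleGraph {W : Type} (C : SimpleGraph W) : Prop :=
  ∃ n, 3 ≤ n ∧ Nonempty (C ≃g SimpleGraph.cycleGraph n)

/-- `G` is 2-edge-connected. -/
def TwoEdgeConnected {V : Type} (G : SimpleGraph V) : Prop :=
  G.Connected ∧ ∀ e ∈ G.edgeSet, (G.deleteEdges {e}).Connected

/-- `G` is 2-connected. -/
def TwoConnected {V : Type} (G : SimpleGraph V) : Prop :=
  G.Connected ∧ 3 ≤ Nat.card V ∧ ∀ v : V, (G.induce {u | u ≠ v}).Connected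

/-- `C₁` and `C₂` are (exactly the) two connected components of `G - {x, y}`. -/
def TwoComponents {V : Type} (G : SimpleGraph V) (x y : V) (C₁ C₂ : Set V) : Prop :=
  Disjoint C₁ C₂ ∧ C₁ ∪ C₂ = {v | v ≠ x ∧ v ≠ y} ∧
  C₁.Nonempty ∧ C₂.Nonempty ∧
  (G.induce C₁).Connected ∧ (G.induce C₂).Connected ∧
  ∀ a ∈ C₁, ∀ b ∈ C₂, ¬ G.Adj a b

/-- `C` is an optimal (longest) cycle to which `G` can be contracted. -/
def OptimalCycle {V W : Type} (G : SimpleGraph V) (C : SimpleGraph W) : Prop :=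
  IsCycleGraph C ∧ ContractibleTo G C ∧
  ∀ (W' : Type) (C' : SimpleGraph W'), IsCycleGraph C' → ContractibleTo G C' →
    Nat.card W' ≤ Nat.card W

/-- `G` can be contracted to a path, with `a` in one endpoint witness set and `b` in
the other, using at most `k` edge contractions. -/
def PathContractFixed {V : Type} (G : SimpleGraph V) (a b : V) (k : ℕ) : Prop :=
  ∃ (n : ℕ) (Wit : Fin (n + 1) → Set V),
    IsWitnessStructure G (SimpleGraph.pathGraph (n + 1)) Wit ∧
    Nat.card V ≤ (n + 1) + k ∧
    ((a ∈ Wit 0 ∧ b ∈ Wit (Fin.last n)) ∨ (a ∈ Wit (Fin.last n) ∧ b ∈ Wit 0))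

/-- The graph `H` obtained from `G` by attaching a pendant path of length `k + 1` at
`u` (ending at the new vertex `Sum.inr (Sum.inl (Fin.last k))`) and a pendant path of
length `k + 1` at `v` (ending at `Sum.inr (Sum.inr (Fin.last k))`). -/
def attachPaths {V : Type} (G : SimpleGraph V) (u v : V) (k : ℕ) :
    SimpleGraph (V ⊕ (Fin (k + 1) ⊕ Fin (k + 1))) :=
  SimpleGraph.fromRel (fun a b =>
    (∃ x y, a = Sum.inl x ∧ b = Sum.inl y ∧ G.Adj x y) ∨
    (a = Sum.inl u ∧ b = Sum.inr (Sum.inl 0)) ∨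
    (a = Sum.inl v ∧ b = Sum.inr (Sum.inr 0)) ∨
    (∃ i j : Fin (k + 1), a = Sum.inr (Sum.inl i) ∧ b = Sum.inr (Sum.inl j) ∧
      (i : ℕ) + 1 = (j : ℕ)) ∨
    (∃ i j : Fin (k + 1), a = Sum.inr (Sum.inr i) ∧ b = Sum.inr (Sum.inr j) ∧
      (i : ℕ) + 1 = (j : ℕ)))

namespace Stmt15Aux

open SimpleGraph

lemma reachable_map' {V V' : Type} {X : SimpleGraph V} {X' : SimpleGraph V'} (f : V → V')
    (hf : ∀ a b, X.Adj a b → X'.Reachable (f a) (f b)) {a b : V}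
    (h : X.Reachable a b) : X'.Reachable (f a) (f b) := by
  obtain ⟨p⟩ := h
  induction p with
  | nil => exact Reachable.refl _
  | cons h p ih => exact (hf _ _ h).trans ih

lemma induce_connected_singleton {V : Type} (G : SimpleGraph V) (a : V) :
    (G.induce {x | x = a}).Connected := by
  haveI : Nonempty {x : V // x ∈ ({x | x = a} : Set V)} := ⟨⟨a, rfl⟩⟩
  refine ⟨fun x y => ?_⟩
  obtain ⟨x, hx⟩ := x
  obtain ⟨y, hy⟩ := y
  simp only [Set.mem_setOf_eq] at hx hy
  subst hx; subst hy
  exact Reachable.refl _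

lemma exists_adj_of_connected {V : Type} {G : SimpleGraph V} {S : Set V}
    (h : (G.induce S).Connected) {a b : V} (ha : a ∈ S) (hb : b ∈ S) (hab : a ≠ b) :
    ∃ x ∈ S, ∃ y ∈ S, G.Adj x y := by
  have hr := h.preconnected ⟨a, ha⟩ ⟨b, hb⟩
  obtain ⟨p⟩ := hr
  cases p with
  | nil => exact absurd (rfl : a = a) hab
  | cons hadj p =>
    rename_i c
    exact ⟨a, ha, c.1, c.2, hadj⟩

lemma contractEdge_adj {V : Type} (G : SimpleGraph V) (u v : V) (a b : {x : V // x ≠ v}) :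
    (G.contractEdge u v).Adj a b ↔ a ≠ b ∧
      (G.Adj a.1 b.1 ∨ (a.1 = u ∧ G.Adj v b.1) ∨ (b.1 = u ∧ G.Adj v a.1)) := by
  simp only [SimpleGraph.contractEdge, SimpleGraph.fromRel_adj]
  constructor
  · rintro ⟨hne, h | h⟩
    · exact ⟨hne, h⟩
    · refine ⟨hne, ?_⟩
      rcases h with h | h | h
      · exact Or.inl h.symm
      · exact Or.inr (Or.inr h)
      · exact Or.inr (Or.inl h)
  · rintro ⟨hne, h⟩
    exact ⟨hne, Or.inl h⟩

lemma contractsIn_finite : ∀ {V : Type} {G : SimpleGraph V} {W : Type} {H : SimpleGraph W} {n : ℕ},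
    ContractsIn G H n → Finite V → Finite W := by
  intro V G W H n h
  induction h with
  | iso e =>
    intro hV
    obtain ⟨e⟩ := e
    exact Finite.of_equiv _ e.toEquiv
  | step u v huv h ih =>
    intro hV
    haveI := hV
    exact ih inferInstance

lemma card_subtype_ne {V : Type} [Finite V] (v : V) :
    Nat.card {x : V // x ≠ v} + 1 = Nat.card V := by
  classical
  haveI := Fintype.ofFinite V
  rw [Nat.card_eq_fintype_card, Nat.card_eq_fintype_card]
  have h1 : Fintype.card {x : V // ¬ x = v} = Fintype.card V - Fintype.card {x : V // x = v} :=
    Fintype.card_subtype_compl _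
  rw [Fintype.card_subtype_eq] at h1
  have h2 : 1 ≤ Fintype.card V := Fintype.card_pos_iff.mpr ⟨v⟩
  have h3 : Fintype.card {x : V // x ≠ v} = Fintype.card {x : V // ¬ x = v} := rfl
  omega

lemma contractsIn_card : ∀ {V : Type} {G : SimpleGraph V} {W : Type} {H : SimpleGraph W} {n : ℕ},
    ContractsIn G H n → Finite V → Nat.card V = Nat.card W + n := by
  intro V G W H n h
  induction h with
  | iso e =>
    intro hV
    obtain ⟨e⟩ := e
    simp [Nat.card_eq_of_bijective _ e.toEquiv.bijective]
  | step u v huv h ih =>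
    intro hV
    haveI := hV
    have h2 := ih inferInstance
    have h3 := card_subtype_ne (V := _) v
    omega

end Stmt15Aux
namespace Stmt15Aux

open SimpleGraph

lemma induce_adj' {V : Type} {G : SimpleGraph V} {S : Set V} {a b : V}
    (ha : a ∈ S) (hb : b ∈ S) (h : G.Adj a b) :
    (G.induce S).Adj ⟨a, ha⟩ ⟨b, hb⟩ := h

lemma induce_adj_iff {V : Type} {G : SimpleGraph V} {S : Set V} {a b : {x // x ∈ S}} :
    (G.induce S).Adj a b ↔ G.Adj a.1 b.1 := Iff.rfl

section Step

variable {V : Type} {G : SimpleGraph V} {u v : V} (huv : G.Adj u v)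

open Classical in
/-- The collapsing map for a contraction. -/
noncomputable def gmap (huv : G.Adj u v) : V → {x : V // x ≠ v} :=
  fun x => if hx : x = v then ⟨u, huv.ne⟩ else ⟨x, hx⟩

lemma gmap_v : gmap huv v = ⟨u, huv.ne⟩ := by unfold gmap; rw [dif_pos rfl]

lemma gmap_ne {x : V} (hx : x ≠ v) : gmap huv x = ⟨x, hx⟩ := by unfold gmap; rw [dif_neg hx]

lemma gmap_sub (p : {x : V // x ≠ v}) : gmap huv p.1 = p := by
  rw [gmap_ne huv p.2]

lemma step_witness {W : Type} {H : SimpleGraph W} {Wit' : W → Set {x : V // x ≠ v}}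
    (hW' : IsWitnessStructure (G.contractEdge u v) H Wit') :
    IsWitnessStructure G H (fun h => gmap huv ⁻¹' Wit' h) := by
  have hu : u ≠ v := huv.ne
  constructor
  · -- connected
    intro h
    set S : Set V := gmap huv ⁻¹' Wit' h with hS
    have hmem : ∀ p : {x : V // x ≠ v}, p ∈ Wit' h → p.1 ∈ S := by
      intro p hp
      simp only [hS, Set.mem_preimage, gmap_sub huv p]
      exact hp
    have hvS : ∀ {p : {x : V // x ≠ v}}, p ∈ Wit' h → p.1 = u → v ∈ S := by
      intro p hp hpu
      simp only [hS, Set.mem_preimage, gmap_v huv]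
      have : p = ⟨u, hu⟩ := Subtype.ext hpu
      rw [← this]; exact hp
    -- lift reachability
    have hf : ∀ p q : {x // x ∈ Wit' h},
        ((G.contractEdge u v).induce (Wit' h)).Adj p q →
        (G.induce S).Reachable ⟨p.1.1, hmem p.1 p.2⟩ ⟨q.1.1, hmem q.1 q.2⟩ := by
      intro p q hpq
      rw [induce_adj_iff, contractEdge_adj] at hpq
      obtain ⟨hne, hcase⟩ := hpq
      rcases hcase with hc | ⟨hpu, hc⟩ | ⟨hqu, hc⟩
      · exact (induce_adj' _ _ hc).reachable
      · have hv : v ∈ S := hvS p.2 hpu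
        have r1 : G.Adj p.1.1 v := by rw [hpu]; exact huv
        exact ((induce_adj' _ hv r1).reachable).trans (induce_adj' hv _ hc).reachable
      · have hv : v ∈ S := hvS q.2 hqu
        have r2 : G.Adj v q.1.1 := by rw [hqu]; exact huv.symm
        exact ((induce_adj' _ hv hc.symm).reachable).trans (induce_adj' hv _ r2).reachable
    have hlift : ∀ p q : {x // x ∈ Wit' h},
        (G.induce S).Reachable ⟨p.1.1, hmem p.1 p.2⟩ ⟨q.1.1, hmem q.1 q.2⟩ := by
      intro p q
      exact reachable_map' (X := (G.contractEdge u v).induce (Wit' h))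
        (fun r => (⟨r.1.1, hmem r.1 r.2⟩ : {x // x ∈ S})) hf
        ((hW'.connected h).preconnected p q)
    have hne' : Nonempty {x // x ∈ Wit' h} := (hW'.connected h).nonempty
    obtain ⟨p0⟩ := hne'
    haveI : Nonempty {x // x ∈ S} := ⟨⟨p0.1.1, hmem p0.1 p0.2⟩⟩
    refine ⟨fun x y => ?_⟩
    have hconn_rep : ∀ x : {a // a ∈ S},
        ∃ p : {a // a ∈ Wit' h}, (G.induce S).Reachable x ⟨p.1.1, hmem p.1 p.2⟩ := by
      intro x
      have hx' : gmap huv x.1 ∈ Wit' h := x.2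
      refine ⟨⟨gmap huv x.1, hx'⟩, ?_⟩
      by_cases hxv : x.1 = v
      · have himg : (gmap huv x.1).1 = u := by rw [hxv, gmap_v huv]
        have hvmem : v ∈ S := hxv ▸ x.2
        have r : G.Adj x.1 (gmap huv x.1).1 := by rw [himg, hxv]; exact huv.symm
        have := induce_adj' x.2 (hmem _ hx') r
        exact this.reachable
      · have himg : (gmap huv x.1) = ⟨x.1, hxv⟩ := gmap_ne huv hxv
        have heq : (⟨(gmap huv x.1).1, hmem _ hx'⟩ : {a // a ∈ S}) = x := by
          apply Subtype.ext
          show (gmap huv x.1).1 = x.1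
          rw [himg]
        rw [heq]
    obtain ⟨px, hpx⟩ := hconn_rep x
    obtain ⟨py, hpy⟩ := hconn_rep y
    exact (hpx.trans (hlift px py)).trans hpy.symm
  · -- adj
    intro h₁ h₂ hne
    rw [hW'.adj h₁ h₂ hne]
    constructor
    · rintro ⟨p, hp, q, hq, hpq⟩
      rw [contractEdge_adj] at hpq
      obtain ⟨hpqne, hcase⟩ := hpq
      rcases hcase with hc | ⟨hpu, hc⟩ | ⟨hqu, hc⟩
      · exact ⟨p.1, by simpa [Set.mem_preimage, gmap_sub huv p] using hp,
          q.1, by simpa [Set.mem_preimage, gmap_sub huv q] using hq, hc⟩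
      · refine ⟨v, ?_, q.1, by simpa [Set.mem_preimage, gmap_sub huv q] using hq, hc⟩
        simp only [Set.mem_preimage, gmap_v huv]
        have : p = ⟨u, huv.ne⟩ := Subtype.ext hpu
        rwa [← this]
      · refine ⟨p.1, by simpa [Set.mem_preimage, gmap_sub huv p] using hp, v, ?_, hc.symm⟩
        simp only [Set.mem_preimage, gmap_v huv]
        have : q = ⟨u, huv.ne⟩ := Subtype.ext hqu
        rwa [← this]
    · rintro ⟨a, ha, b, hb, hab⟩
      refine ⟨gmap huv a, ha, gmap huv b, hb, ?_⟩
      have hgne : gmap huv a ≠ gmap huv b := by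
        intro hcon
        exact (hW'.disjoint h₁ h₂ hne).ne_of_mem ha (hcon ▸ hb) rfl
      rw [contractEdge_adj]
      refine ⟨hgne, ?_⟩
      by_cases hav : a = v
      · have hbv : b ≠ v := fun hbv => hab.ne (hav.trans hbv.symm)
        refine Or.inr (Or.inl ?_)
        rw [hav, gmap_v huv, gmap_ne huv hbv]
        exact ⟨rfl, hav ▸ hab⟩
      · by_cases hbv : b = v
        · refine Or.inr (Or.inr ?_)
          rw [hbv, gmap_v huv, gmap_ne huv hav]
          exact ⟨rfl, hbv ▸ hab.symm⟩
        · refine Or.inl ?_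
          rw [gmap_ne huv hav, gmap_ne huv hbv]
          exact hab
  · -- cover
    intro x
    obtain ⟨h, hh⟩ := hW'.cover (gmap huv x)
    exact ⟨h, hh⟩
  · -- disjoint
    intro h₁ h₂ hne
    rw [Set.disjoint_left]
    intro x hx₁ hx₂
    exact (hW'.disjoint h₁ h₂ hne).ne_of_mem hx₁ hx₂ rfl

end Step

lemma witness_of_contractsIn : ∀ {V : Type} {G : SimpleGraph V} {W : Type} {H : SimpleGraph W}
    {n : ℕ}, ContractsIn G H n → ∃ Wit : W → Set V, IsWitnessStructure G H Wit := by
  intro V G W H n h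
  induction h with
  | iso e =>
    obtain ⟨e⟩ := e
    refine ⟨fun h => {x | e x = h}, ?_, ?_, ?_, ?_⟩
    · intro h
      have : {x | e x = h} = {x | x = e.symm h} := by
        ext x
        simp only [Set.mem_setOf_eq]
        exact e.toEquiv.apply_eq_iff_eq_symm_apply
      rw [this]
      exact induce_connected_singleton _ _
    · intro h₁ h₂ hne
      constructor
      · intro hadj
        refine ⟨e.symm h₁, e.apply_symm_apply h₁, e.symm h₂, e.apply_symm_apply h₂, ?_⟩
        refine e.map_adj_iff.mp ?_
        rw [e.apply_symm_apply, e.apply_symm_apply]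
        exact hadj
      · rintro ⟨a, ha, b, hb, hab⟩
        have := e.map_adj_iff.mpr hab
        rwa [show e a = h₁ from ha, show e b = h₂ from hb] at this
    · intro x; exact ⟨e x, rfl⟩
    · intro h₁ h₂ hne
      rw [Set.disjoint_left]
      intro x hx₁ hx₂
      exact hne (hx₁ ▸ hx₂)
  | step u v huv h ih =>
    obtain ⟨Wit', hW'⟩ := ih
    exact ⟨_, step_witness huv hW'⟩

end Stmt15Aux
namespace Stmt15Aux

open SimpleGraph

section B1

variable {V W : Type} {G : SimpleGraph V} {H : SimpleGraph W} {Wit : W → Set V}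

lemma witness_nonempty (hW : IsWitnessStructure G H Wit) (h : W) : (Wit h).Nonempty := by
  obtain ⟨x⟩ := (hW.connected h).nonempty
  exact ⟨x.1, x.2⟩

lemma mem_unique (hW : IsWitnessStructure G H Wit) {z : V} {h h' : W}
    (h1 : z ∈ Wit h) (h2 : z ∈ Wit h') : h = h' := by
  by_contra hne
  exact (hW.disjoint _ _ hne).ne_of_mem h1 h2 rfl

/-- the index of a vertex: the unique witness set containing it -/
noncomputable def widx (hW : IsWitnessStructure G H Wit) (x : V) : W :=
  (hW.cover x).choose

lemma widx_mem (hW : IsWitnessStructure G H Wit) (x : V) : x ∈ Wit (widx hW x) :=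
  (hW.cover x).choose_spec

lemma widx_eq (hW : IsWitnessStructure G H Wit) {x : V} {h : W} (hx : x ∈ Wit h) :
    widx hW x = h :=
  mem_unique hW (widx_mem hW x) hx

/-- If every witness set is a subsingleton, we get an isomorphism. -/
noncomputable def witness_iso (hW : IsWitnessStructure G H Wit)
    (hsub : ∀ h, (Wit h).Subsingleton) : G ≃g H := by
  have hrep : ∀ h, ∃ x, x ∈ Wit h := fun h => witness_nonempty hW h
  classical
  refine ⟨⟨fun x => widx hW x, fun h => (hrep h).choose, ?_, ?_⟩, ?_⟩
  · intro x
    exact hsub _ (hrep (widx hW x)).choose_spec (widx_mem hW x)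
  · intro h
    exact widx_eq hW (hrep h).choose_spec
  · intro a b
    simp only [Equiv.coe_fn_mk]
    by_cases hab : a = b
    · subst hab
      constructor
      · intro hc; exact absurd hc (H.irrefl)
      · intro hc; exact absurd hc (G.irrefl)
    · have hne : widx hW a ≠ widx hW b := by
        intro hcon
        exact hab (hsub _ (widx_mem hW a) (hcon ▸ widx_mem hW b))
      rw [hW.adj _ _ hne]
      constructor
      · rintro ⟨p, hp, q, hq, hpq⟩
        have h1 : p = a := hsub _ hp (widx_mem hW a)
        have h2 : q = b := hsub _ hq (widx_mem hW b)
        rwa [h1, h2] at hpq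
      · intro hab'
        exact ⟨a, widx_mem hW a, b, widx_mem hW b, hab'⟩

lemma contract_witness (hW : IsWitnessStructure G H Wit) {h₀ : W} {x y : V}
    (hx : x ∈ Wit h₀) (hy : y ∈ Wit h₀) (hxy : G.Adj x y) :
    IsWitnessStructure (G.contractEdge x y) H
      (fun h => {p : {z : V // z ≠ y} | p.1 ∈ Wit h}) := by
  have hxney : x ≠ y := hxy.ne
  classical
  constructor
  · -- connected
    intro h
    set T : Set {z : V // z ≠ y} := {p | p.1 ∈ Wit h} with hT
    have hxh : ∀ z : V, z ∈ Wit h → z = y → x ∈ Wit h := by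
      intro z hz hzy
      have : h = h₀ := mem_unique hW (hzy ▸ hz) hy
      rw [this]; exact hx
    have fdef : ∀ z : {a // a ∈ Wit h}, ∃ p : {a // a ∈ T}, (z.1 ≠ y → p.1.1 = z.1) ∧
        (z.1 = y → p.1.1 = x) := by
      intro z
      by_cases hzy : z.1 = y
      · refine ⟨⟨⟨x, hxney⟩, hxh z.1 z.2 hzy⟩, fun hc => absurd hzy hc, fun _ => rfl⟩
      · exact ⟨⟨⟨z.1, hzy⟩, z.2⟩, fun _ => rfl, fun hc => absurd hc hzy⟩
    choose f hf1 hf2 using fdef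
    have hfadj : ∀ z w : {a // a ∈ Wit h}, (G.induce (Wit h)).Adj z w →
        ((G.contractEdge x y).induce T).Reachable (f z) (f w) := by
      intro z w hzw
      have hadj : G.Adj z.1 w.1 := hzw
      have hznw : z.1 ≠ w.1 := hadj.ne
      by_cases hzy : z.1 = y
      · have hwy : w.1 ≠ y := fun hc => hznw (hzy.trans hc.symm)
        have hfz : (f z).1.1 = x := hf2 z hzy
        have hfw : (f w).1.1 = w.1 := hf1 w hwy
        by_cases hwx : w.1 = x
        · have : f z = f w := Subtype.ext (Subtype.ext (by rw [hfz, hfw, hwx]))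
          rw [this]
        · refine Adj.reachable ?_
          show (G.contractEdge x y).Adj (f z).1 (f w).1
          rw [contractEdge_adj]
          refine ⟨fun hc => hwx (by rw [← hfw, ← hc, hfz]), Or.inr (Or.inl ?_)⟩
          rw [hfz, hfw]
          exact ⟨rfl, hzy ▸ hadj⟩
      · by_cases hwy : w.1 = y
        · have hfz : (f z).1.1 = z.1 := hf1 z hzy
          have hfw : (f w).1.1 = x := hf2 w hwy
          by_cases hzx : z.1 = x
          · have : f z = f w := Subtype.ext (Subtype.ext (by rw [hfz, hfw, hzx]))
            rw [this]
          · refine Adj.reachable ?_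
            show (G.contractEdge x y).Adj (f z).1 (f w).1
            rw [contractEdge_adj]
            refine ⟨fun hc => hzx (by rw [← hfz, hc, hfw]), Or.inr (Or.inr ?_)⟩
            rw [hfz, hfw]
            exact ⟨rfl, (hwy ▸ hadj).symm⟩
        · refine Adj.reachable ?_
          show (G.contractEdge x y).Adj (f z).1 (f w).1
          rw [contractEdge_adj]
          refine ⟨fun hc => hznw ?_, Or.inl ?_⟩
          · rw [← hf1 z hzy, hc, hf1 w hwy]
          · rw [hf1 z hzy, hf1 w hwy]; exact hadj
    obtain ⟨z0, hz0⟩ := witness_nonempty hW h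
    haveI : Nonempty {a // a ∈ T} := ⟨f ⟨z0, hz0⟩⟩
    refine ⟨fun p q => ?_⟩
    have hrep : ∀ p : {a // a ∈ T}, f ⟨p.1.1, p.2⟩ = p := by
      intro p
      exact Subtype.ext (Subtype.ext (hf1 ⟨p.1.1, p.2⟩ p.1.2))
    have := reachable_map' f hfadj
      ((hW.connected h).preconnected ⟨p.1.1, p.2⟩ ⟨q.1.1, q.2⟩)
    rwa [hrep p, hrep q] at this
  · -- adj
    intro h₁ h₂ hne
    rw [hW.adj h₁ h₂ hne]
    constructor
    · rintro ⟨a, ha, b, hb, hab⟩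
      have key : ∀ {h : W} {z : V}, z ∈ Wit h → ∃ p : {c : V // c ≠ y},
          p ∈ {p : {z : V // z ≠ y} | p.1 ∈ Wit h} ∧ (z ≠ y → p.1 = z) ∧ (z = y → p.1 = x) := by
        intro h z hz
        by_cases hzy : z = y
        · have hh : h = h₀ := mem_unique hW (hzy ▸ hz) hy
          exact ⟨⟨x, hxney⟩, by simp only [Set.mem_setOf_eq]; rw [hh]; exact hx,
            fun hc => absurd hzy hc, fun _ => rfl⟩
        · exact ⟨⟨z, hzy⟩, hz, fun _ => rfl, fun hc => absurd hc hzy⟩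
      obtain ⟨p, hp, hp1, hp2⟩ := key ha
      obtain ⟨q, hq, hq1, hq2⟩ := key hb
      refine ⟨p, hp, q, hq, ?_⟩
      rw [contractEdge_adj]
      have hpq : p ≠ q := by
        intro hc
        exact (hW.disjoint h₁ h₂ hne).ne_of_mem hp (hc ▸ hq) rfl
      refine ⟨hpq, ?_⟩
      by_cases hay : a = y
      · have hby : b ≠ y := fun hc => hab.ne (hay.trans hc.symm)
        refine Or.inr (Or.inl ?_)
        rw [hp2 hay, hq1 hby]
        exact ⟨rfl, hay ▸ hab⟩
      · by_cases hby : b = y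
        · refine Or.inr (Or.inr ?_)
          rw [hp1 hay, hq2 hby]
          exact ⟨rfl, (hby ▸ hab).symm⟩
        · refine Or.inl ?_
          rw [hp1 hay, hq1 hby]
          exact hab
    · rintro ⟨p, hp, q, hq, hpq⟩
      rw [contractEdge_adj] at hpq
      obtain ⟨hpqne, hcase⟩ := hpq
      rcases hcase with hc | ⟨hpx, hc⟩ | ⟨hqx, hc⟩
      · exact ⟨p.1, hp, q.1, hq, hc⟩
      · have hh₁ : h₁ = h₀ := mem_unique hW (hpx ▸ hp) hx
        exact ⟨y, by rw [hh₁]; exact hy, q.1, hq, hc⟩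
      · have hh₂ : h₂ = h₀ := mem_unique hW (hqx ▸ hq) hx
        exact ⟨p.1, hp, y, by rw [hh₂]; exact hy, hc.symm⟩
  · -- cover
    intro p
    obtain ⟨h, hh⟩ := hW.cover p.1
    exact ⟨h, hh⟩
  · -- disjoint
    intro h₁ h₂ hne
    rw [Set.disjoint_left]
    intro p hp₁ hp₂
    exact (hW.disjoint h₁ h₂ hne).ne_of_mem hp₁ hp₂ rfl

end B1

lemma contractsIn_of_witness : ∀ (N : ℕ) {V : Type} [Finite V] {G : SimpleGraph V} {W : Type}
    {H : SimpleGraph W} {Wit : W → Set V}, Nat.card V = N → IsWitnessStructure G H Wit →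
    ContractsIn G H (N - Nat.card W) := by
  intro N
  induction N using Nat.strong_induction_on with
  | _ N ih =>
    intro V _ G W H Wit hcard hW
    classical
    by_cases hsub : ∀ h, (Wit h).Subsingleton
    · have e := witness_iso hW hsub
      have hWfin : Finite W := Finite.of_equiv V e.toEquiv
      have hcW : Nat.card W = N := by
        rw [← hcard]
        exact (Nat.card_eq_of_bijective _ e.toEquiv.bijective).symm
      rw [hcW, Nat.sub_self]
      exact ContractsIn.iso ⟨e⟩
    · push_neg at hsub
      obtain ⟨h₀, hh₀⟩ := hsub
      obtain ⟨a, ha, b, hb, hab⟩ := hh₀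
      obtain ⟨x, hx, y, hy, hxy⟩ := exists_adj_of_connected (hW.connected h₀) ha hb hab
      have hW' := contract_witness hW hx hy hxy
      have hcard' : Nat.card {z : V // z ≠ y} = N - 1 := by
        have := card_subtype_ne (V := V) y
        omega
      have hNpos : 0 < N := by
        rw [← hcard]
        exact Nat.card_pos_iff.mpr ⟨⟨a⟩, inferInstance⟩
      have hstep := ih (N - 1) (by omega) hcard' hW'
      -- card W ≤ N - 1
      have hrep : ∀ h, ∃ p : {z : V // z ≠ y}, p.1 ∈ Wit h := by
        intro h
        by_cases hh : h = h₀
        · exact ⟨⟨x, hxy.ne⟩, hh ▸ hx⟩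
        · obtain ⟨z, hz⟩ := witness_nonempty hW h
          have hzy : z ≠ y := by
            intro hc
            exact hh (mem_unique hW (hc ▸ hz) hy)
          exact ⟨⟨z, hzy⟩, hz⟩
      choose r hr using hrep
      have hrinj : Function.Injective r := by
        intro h h' hc
        exact mem_unique hW (hr h) (hc ▸ hr h')
      have hcle : Nat.card W ≤ N - 1 := by
        rw [← hcard']
        exact Nat.card_le_card_of_injective r hrinj
      have := ContractsIn.step x y hxy hstep
      have harith : N - 1 - Nat.card W + 1 = N - Nat.card W := by omega
      rwa [harith] at this

end Stmt15Aux
namespace Stmt15Aux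

open SimpleGraph

section AdjLemmas

variable {V : Type} (G : SimpleGraph V) (u v : V) (k : ℕ)

lemma ap_adj_inl_inl {x y : V} :
    (attachPaths G u v k).Adj (Sum.inl x) (Sum.inl y) ↔ G.Adj x y := by
  simp only [attachPaths, fromRel_adj]
  constructor
  · rintro ⟨hne, h | h⟩ <;>
    · rcases h with ⟨a, b, h1, h2, h3⟩ | ⟨h1, h2⟩ | ⟨h1, h2⟩ | ⟨i, j, h1, h2, h3⟩ | ⟨i, j, h1, h2, h3⟩ <;>
        first
          | (obtain rfl := Sum.inl_injective h1
             obtain rfl := Sum.inl_injective h2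
             first | exact h3 | exact h3.symm)
          | simp_all
  · intro h
    exact ⟨by simpa using h.ne, Or.inl (Or.inl ⟨x, y, rfl, rfl, h⟩)⟩

lemma ap_adj_inl_inrl {x : V} {j : Fin (k + 1)} :
    (attachPaths G u v k).Adj (Sum.inl x) (Sum.inr (Sum.inl j)) ↔ x = u ∧ j = 0 := by
  simp only [attachPaths, fromRel_adj]
  constructor
  · rintro ⟨hne, h | h⟩ <;>
    · rcases h with ⟨a, b, h1, h2, h3⟩ | ⟨h1, h2⟩ | ⟨h1, h2⟩ | ⟨i, j', h1, h2, h3⟩ | ⟨i, j', h1, h2, h3⟩ <;>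
        simp_all
  · rintro ⟨rfl, rfl⟩
    exact ⟨by simp, Or.inl (Or.inr (Or.inl ⟨rfl, rfl⟩))⟩

lemma ap_adj_inl_inrr {x : V} {j : Fin (k + 1)} :
    (attachPaths G u v k).Adj (Sum.inl x) (Sum.inr (Sum.inr j)) ↔ x = v ∧ j = 0 := by
  simp only [attachPaths, fromRel_adj]
  constructor
  · rintro ⟨hne, h | h⟩ <;>
    · rcases h with ⟨a, b, h1, h2, h3⟩ | ⟨h1, h2⟩ | ⟨h1, h2⟩ | ⟨i, j', h1, h2, h3⟩ | ⟨i, j', h1, h2, h3⟩ <;>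
        simp_all
  · rintro ⟨rfl, rfl⟩
    exact ⟨by simp, Or.inl (Or.inr (Or.inr (Or.inl ⟨rfl, rfl⟩)))⟩

lemma ap_adj_inrl_inrl {i j : Fin (k + 1)} :
    (attachPaths G u v k).Adj (Sum.inr (Sum.inl i)) (Sum.inr (Sum.inl j)) ↔
      (i : ℕ) + 1 = j ∨ (j : ℕ) + 1 = i := by
  simp only [attachPaths, fromRel_adj]
  constructor
  · rintro ⟨hne, h | h⟩ <;>
    · rcases h with ⟨a, b, h1, h2, h3⟩ | ⟨h1, h2⟩ | ⟨h1, h2⟩ | ⟨i', j', h1, h2, h3⟩ | ⟨i', j', h1, h2, h3⟩ <;>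
        simp_all
  · rintro (h | h)
    · refine ⟨?_, Or.inl (Or.inr (Or.inr (Or.inr (Or.inl ⟨i, j, rfl, rfl, h⟩))))⟩
      simp only [ne_eq, Sum.inr.injEq, Sum.inl.injEq]
      intro hc
      rw [hc] at h
      omega
    · refine ⟨?_, Or.inr (Or.inr (Or.inr (Or.inr (Or.inl ⟨j, i, rfl, rfl, h⟩))))⟩
      simp only [ne_eq, Sum.inr.injEq, Sum.inl.injEq]
      intro hc
      rw [hc] at h
      omega

lemma ap_adj_inrr_inrr {i j : Fin (k + 1)} :
    (attachPaths G u v k).Adj (Sum.inr (Sum.inr i)) (Sum.inr (Sum.inr j)) ↔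
      (i : ℕ) + 1 = j ∨ (j : ℕ) + 1 = i := by
  simp only [attachPaths, fromRel_adj]
  constructor
  · rintro ⟨hne, h | h⟩ <;>
    · rcases h with ⟨a, b, h1, h2, h3⟩ | ⟨h1, h2⟩ | ⟨h1, h2⟩ | ⟨i', j', h1, h2, h3⟩ | ⟨i', j', h1, h2, h3⟩ <;>
        simp_all
  · rintro (h | h)
    · refine ⟨?_, Or.inl (Or.inr (Or.inr (Or.inr (Or.inr ⟨i, j, rfl, rfl, h⟩))))⟩
      simp only [ne_eq, Sum.inr.injEq]
      intro hc
      rw [hc] at h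
      omega
    · refine ⟨?_, Or.inr (Or.inr (Or.inr (Or.inr (Or.inr ⟨j, i, rfl, rfl, h⟩))))⟩
      simp only [ne_eq, Sum.inr.injEq]
      intro hc
      rw [hc] at h
      omega

lemma ap_adj_inrl_inrr {i j : Fin (k + 1)} :
    ¬ (attachPaths G u v k).Adj (Sum.inr (Sum.inl i)) (Sum.inr (Sum.inr j)) := by
  simp only [attachPaths, fromRel_adj]
  rintro ⟨hne, h | h⟩ <;>
  · rcases h with ⟨a, b, h1, h2, h3⟩ | ⟨h1, h2⟩ | ⟨h1, h2⟩ | ⟨i', j', h1, h2, h3⟩ | ⟨i', j', h1, h2, h3⟩ <;>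
      simp_all

end AdjLemmas

lemma pathGraph_adj_rev {n : ℕ} {i j : Fin (n + 1)} :
    (pathGraph (n + 1)).Adj i.rev j.rev ↔ (pathGraph (n + 1)).Adj i j := by
  rw [pathGraph_adj, pathGraph_adj]
  simp only [Fin.val_rev]
  have hi := i.isLt
  have hj := j.isLt
  omega

lemma witness_rev {V : Type} {n : ℕ} {G : SimpleGraph V} {Wit : Fin (n + 1) → Set V}
    (hW : IsWitnessStructure G (pathGraph (n + 1)) Wit) :
    IsWitnessStructure G (pathGraph (n + 1)) (fun i => Wit i.rev) := by
  constructor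
  · intro h; exact hW.connected _
  · intro h₁ h₂ hne
    rw [← pathGraph_adj_rev]
    exact hW.adj _ _ (fun hc => hne (by simpa using congrArg Fin.rev hc))
  · intro x
    obtain ⟨h, hh⟩ := hW.cover x
    exact ⟨h.rev, by simpa using hh⟩
  · intro h₁ h₂ hne
    exact hW.disjoint _ _ (fun hc => hne (by simpa using congrArg Fin.rev hc))

end Stmt15Aux
namespace Stmt15Aux

open SimpleGraph

section Forward

variable {V : Type} {G : SimpleGraph V} {u v : V} {k n : ℕ}

/-- The witness structure for `attachPaths` built from one for `G`. -/
def NWit (Wit : Fin (n + 1) → Set V) (k : ℕ) :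
    Fin (n + 2 * k + 3) → Set (V ⊕ (Fin (k + 1) ⊕ Fin (k + 1))) :=
  fun i => {z | (∃ j : Fin (k + 1), z = Sum.inr (Sum.inl j) ∧ (j : ℕ) + i.1 = k) ∨
    (∃ x : V, ∃ hj : i.1 - (k + 1) < n + 1,
      z = Sum.inl x ∧ k + 1 ≤ i.1 ∧ x ∈ Wit ⟨i.1 - (k + 1), hj⟩) ∨
    (∃ j : Fin (k + 1), z = Sum.inr (Sum.inr j) ∧ (i : ℕ) = k + n + 2 + j.1)}

lemma mem_NWit_inl {Wit : Fin (n + 1) → Set V} {i : Fin (n + 2 * k + 3)} {x : V} :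
    Sum.inl x ∈ NWit Wit k i ↔
      ∃ hj : i.1 - (k + 1) < n + 1, k + 1 ≤ i.1 ∧ x ∈ Wit ⟨i.1 - (k + 1), hj⟩ := by
  simp [NWit]

lemma mem_NWit_inrl {Wit : Fin (n + 1) → Set V} {i : Fin (n + 2 * k + 3)} {j : Fin (k + 1)} :
    Sum.inr (Sum.inl j) ∈ NWit Wit k i ↔ (j : ℕ) + i.1 = k := by
  simp [NWit]

lemma mem_NWit_inrr {Wit : Fin (n + 1) → Set V} {i : Fin (n + 2 * k + 3)} {j : Fin (k + 1)} :
    Sum.inr (Sum.inr j) ∈ NWit Wit k i ↔ (i : ℕ) = k + n + 2 + j.1 := by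
  simp [NWit]

lemma forward_witness {Wit : Fin (n + 1) → Set V}
    (hW : IsWitnessStructure G (pathGraph (n + 1)) Wit)
    (hu : u ∈ Wit 0) (hv : v ∈ Wit (Fin.last n)) :
    IsWitnessStructure (attachPaths G u v k) (pathGraph (n + 2 * k + 3)) (NWit Wit k) := by
  have huniq := fun {z : V} {h h'} => mem_unique hW (z := z) (h := h) (h' := h')
  constructor
  · -- connected
    intro i
    rcases Nat.lt_or_ge i.1 (k + 1) with hik | hik
    · have : NWit Wit k i = {z | z = Sum.inr (Sum.inl ⟨k - i.1, by omega⟩)} := by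
        ext z
        rcases z with x | j | j
        · simp only [mem_NWit_inl, Set.mem_setOf_eq]
          constructor
          · rintro ⟨hj, h1, h2⟩; omega
          · intro hc; exact absurd hc (by simp)
        · simp only [mem_NWit_inrl, Set.mem_setOf_eq, Sum.inr.injEq, Sum.inl.injEq]
          rw [Fin.ext_iff]
          have := j.isLt
          simp only []
          omega
        · simp only [mem_NWit_inrr, Set.mem_setOf_eq]
          have := i.isLt
          constructor
          · intro h; omega
          · intro hc; exact absurd hc (by simp)
      rw [this]
      exact induce_connected_singleton _ _
    · rcases Nat.lt_or_ge i.1 (k + n + 2) with hik2 | hik2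
      · -- middle
        set i' : Fin (n + 1) := ⟨i.1 - (k + 1), by omega⟩ with hi'
        have hmem : ∀ z : {a // a ∈ Wit i'},
            Sum.inl z.1 ∈ NWit Wit k i := by
          intro z
          rw [mem_NWit_inl]
          exact ⟨by omega, hik, z.2⟩
        have hfadj : ∀ z w : {a // a ∈ Wit i'}, (G.induce (Wit i')).Adj z w →
            ((attachPaths G u v k).induce (NWit Wit k i)).Reachable
              ⟨Sum.inl z.1, hmem z⟩ ⟨Sum.inl w.1, hmem w⟩ := by
          intro z w hzw
          refine Adj.reachable ?_
          show (attachPaths G u v k).Adj (Sum.inl z.1) (Sum.inl w.1)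
          rw [ap_adj_inl_inl]
          exact hzw
        obtain ⟨z0, hz0⟩ := witness_nonempty hW i'
        haveI : Nonempty {a // a ∈ NWit Wit k i} := ⟨⟨Sum.inl z0, hmem ⟨z0, hz0⟩⟩⟩
        refine ⟨fun p q => ?_⟩
        have hform : ∀ p : {a // a ∈ NWit Wit k i}, ∃ x : {a // a ∈ Wit i'},
            p = ⟨Sum.inl x.1, hmem x⟩ := by
          intro p
          obtain ⟨a, hp⟩ := p
          rcases a with x | j | j
          · rw [mem_NWit_inl] at hp
            obtain ⟨hj, h1, h2⟩ := hp
            exact ⟨⟨x, h2⟩, rfl⟩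
          · rw [mem_NWit_inrl] at hp
            have := (0:ℕ); omega
          · rw [mem_NWit_inrr] at hp
            have := i.isLt; omega
        obtain ⟨px, hpx⟩ := hform p
        obtain ⟨qx, hqx⟩ := hform q
        rw [hpx, hqx]
        exact reachable_map'
          (fun x : {a // a ∈ Wit i'} =>
            (⟨Sum.inl x.1, hmem x⟩ : {a // a ∈ NWit Wit k i})) hfadj
          ((hW.connected i').preconnected px qx)
      · -- B part singleton
        have hilt := i.isLt
        have : NWit Wit k i = {z | z = Sum.inr (Sum.inr ⟨i.1 - (k + n + 2), by omega⟩)} := by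
          ext z
          rcases z with x | j | j
          · simp only [mem_NWit_inl, Set.mem_setOf_eq]
            constructor
            · rintro ⟨hj, h1, h2⟩; omega
            · intro hc; exact absurd hc (by simp)
          · simp only [mem_NWit_inrl, Set.mem_setOf_eq]
            have := j.isLt
            constructor
            · intro h; omega
            · intro hc; exact absurd hc (by simp)
          · simp only [mem_NWit_inrr, Set.mem_setOf_eq, Sum.inr.injEq]
            rw [Fin.ext_iff]
            have := j.isLt
            simp only []
            omega
        rw [this]
        exact induce_connected_singleton _ _
  · -- adjacency
    intro i j hne
    have hilt := i.isLt
    have hjlt := j.isLt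
    constructor
    · intro hadj
      rw [pathGraph_adj] at hadj
      -- reduce to consecutive case by symmetry
      have consec : ∀ i j : Fin (n + 2 * k + 3), (i : ℕ) + 1 = j →
          ∃ a ∈ NWit Wit k i, ∃ b ∈ NWit Wit k j, (attachPaths G u v k).Adj a b := by
        clear hadj hne hilt hjlt i j
        intro i j hij
        have hilt := i.isLt
        have hjlt := j.isLt
        rcases Nat.lt_or_ge j.1 (k + 1) with hjk | hjk
        · refine ⟨Sum.inr (Sum.inl ⟨k - i.1, by omega⟩), ?_,
            Sum.inr (Sum.inl ⟨k - j.1, by omega⟩), ?_, ?_⟩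
          · rw [mem_NWit_inrl]; simp only []; omega
          · rw [mem_NWit_inrl]; simp only []; omega
          · rw [ap_adj_inrl_inrl]; simp only []; omega
        · rcases Nat.lt_or_ge j.1 (k + n + 2) with hjk2 | hjk2
          · rcases Nat.lt_or_ge i.1 (k + 1) with hik | hik
            · -- i = k, j = k+1 : p_0 -- u
              have hik' : i.1 = k := by omega
              refine ⟨Sum.inr (Sum.inl 0), ?_, Sum.inl u, ?_, ?_⟩
              · rw [mem_NWit_inrl]
                have h00 : ((0 : Fin (k + 1)) : ℕ) = 0 := rfl
                omega
              · rw [mem_NWit_inl]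
                refine ⟨by omega, by omega, ?_⟩
                have : (⟨j.1 - (k + 1), by omega⟩ : Fin (n + 1)) = 0 := by
                  rw [Fin.ext_iff]; simp only [Fin.val_zero]; omega
                rw [this]; exact hu
              · rw [SimpleGraph.adj_comm, ap_adj_inl_inrl]
                exact ⟨rfl, rfl⟩
            · -- both middle
              set i' : Fin (n + 1) := ⟨i.1 - (k + 1), by omega⟩ with hi'
              set j' : Fin (n + 1) := ⟨j.1 - (k + 1), by omega⟩ with hj'
              have hne' : i' ≠ j' := by
                rw [Fin.ne_iff_vne]; simp only [hi', hj']; omega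
              have hadj' : (pathGraph (n + 1)).Adj i' j' := by
                rw [pathGraph_adj]; simp only [hi', hj']; omega
              obtain ⟨a, ha, b, hb, hab⟩ := (hW.adj i' j' hne').mp hadj'
              refine ⟨Sum.inl a, ?_, Sum.inl b, ?_, ?_⟩
              · rw [mem_NWit_inl]; exact ⟨by omega, by omega, ha⟩
              · rw [mem_NWit_inl]; exact ⟨by omega, by omega, hb⟩
              · rw [ap_adj_inl_inl]; exact hab
          · rcases Nat.lt_or_ge i.1 (k + n + 2) with hik2 | hik2
            · -- i = k+n+1, j = k+n+2 : v -- p'_0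
              have hik' : i.1 = k + n + 1 := by omega
              refine ⟨Sum.inl v, ?_, Sum.inr (Sum.inr 0), ?_, ?_⟩
              · rw [mem_NWit_inl]
                refine ⟨by omega, by omega, ?_⟩
                have : (⟨i.1 - (k + 1), by omega⟩ : Fin (n + 1)) = Fin.last n := by
                  rw [Fin.ext_iff]; simp only [Fin.val_last]; omega
                rw [this]; exact hv
              · rw [mem_NWit_inrr]; simp only [Fin.val_zero]; omega
              · rw [ap_adj_inl_inrr]
                exact ⟨rfl, rfl⟩
            · -- both in B
              refine ⟨Sum.inr (Sum.inr ⟨i.1 - (k + n + 2), by omega⟩), ?_,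
                Sum.inr (Sum.inr ⟨j.1 - (k + n + 2), by omega⟩), ?_, ?_⟩
              · rw [mem_NWit_inrr]; simp only []; omega
              · rw [mem_NWit_inrr]; simp only []; omega
              · rw [ap_adj_inrr_inrr]; simp only []; omega
      rcases hadj with h | h
      · exact consec i j h
      · obtain ⟨a, ha, b, hb, hab⟩ := consec j i h
        exact ⟨b, hb, a, ha, hab.symm⟩
    · rintro ⟨a, ha, b, hb, hab⟩
      rw [pathGraph_adj]
      rcases a with x | jj | jj <;> rcases b with y | jj' | jj'
      · -- inl inl
        rw [mem_NWit_inl] at ha hb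
        obtain ⟨hj1, hk1, ha⟩ := ha
        obtain ⟨hj2, hk2, hb⟩ := hb
        rw [ap_adj_inl_inl] at hab
        have hne' : (⟨i.1 - (k + 1), hj1⟩ : Fin (n + 1)) ≠ ⟨j.1 - (k + 1), hj2⟩ := by
          rw [Fin.ne_iff_vne]; simp only []
          intro hc
          exact hne (by rw [Fin.ext_iff]; omega)
        have := (hW.adj _ _ hne').mpr ⟨x, ha, y, hb, hab⟩
        rw [pathGraph_adj] at this
        simp only [] at this
        omega
      · rw [ap_adj_inl_inrl] at hab
        obtain ⟨rfl, rfl⟩ := hab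
        rw [mem_NWit_inl] at ha
        rw [mem_NWit_inrl] at hb
        obtain ⟨hj1, hk1, ha⟩ := ha
        have h0 : (⟨i.1 - (k + 1), hj1⟩ : Fin (n + 1)) = 0 := by
          have := huniq ha hu
          exact this
        rw [Fin.ext_iff] at h0
        simp only [Fin.val_zero] at h0 hb
        omega
      · rw [ap_adj_inl_inrr] at hab
        obtain ⟨rfl, rfl⟩ := hab
        rw [mem_NWit_inl] at ha
        rw [mem_NWit_inrr] at hb
        obtain ⟨hj1, hk1, ha⟩ := ha
        have h0 : (⟨i.1 - (k + 1), hj1⟩ : Fin (n + 1)) = Fin.last n := by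
          exact huniq ha hv
        rw [Fin.ext_iff] at h0
        simp only [Fin.val_last, Fin.val_zero] at h0 hb
        omega
      · rw [SimpleGraph.adj_comm, ap_adj_inl_inrl] at hab
        obtain ⟨rfl, rfl⟩ := hab
        rw [mem_NWit_inl] at hb
        rw [mem_NWit_inrl] at ha
        obtain ⟨hj1, hk1, hb⟩ := hb
        have h0 : (⟨j.1 - (k + 1), hj1⟩ : Fin (n + 1)) = 0 := huniq hb hu
        rw [Fin.ext_iff] at h0
        simp only [Fin.val_zero] at h0 ha
        omega
      · rw [ap_adj_inrl_inrl] at hab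
        rw [mem_NWit_inrl] at ha hb
        omega
      · exact absurd hab (ap_adj_inrl_inrr _ _ _ _)
      · rw [SimpleGraph.adj_comm, ap_adj_inl_inrr] at hab
        obtain ⟨rfl, rfl⟩ := hab
        rw [mem_NWit_inl] at hb
        rw [mem_NWit_inrr] at ha
        obtain ⟨hj1, hk1, hb⟩ := hb
        have h0 : (⟨j.1 - (k + 1), hj1⟩ : Fin (n + 1)) = Fin.last n := huniq hb hv
        rw [Fin.ext_iff] at h0
        simp only [Fin.val_last, Fin.val_zero] at h0 ha
        omega
      · rw [SimpleGraph.adj_comm] at hab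
        exact absurd hab (ap_adj_inrl_inrr _ _ _ _)
      · rw [ap_adj_inrr_inrr] at hab
        rw [mem_NWit_inrr] at ha hb
        omega
  · -- cover
    rintro (x | jj | jj)
    · obtain ⟨h, hh⟩ := hW.cover x
      have hlt := h.isLt
      refine ⟨⟨k + 1 + h.1, by omega⟩, ?_⟩
      rw [mem_NWit_inl]
      have hval : ((⟨k + 1 + h.1, by omega⟩ : Fin (n + 2 * k + 3)) : ℕ) = k + 1 + h.1 := rfl
      rw [hval]
      refine ⟨by omega, by omega, ?_⟩
      have heq : (⟨k + 1 + h.1 - (k + 1), by omega⟩ : Fin (n + 1)) = h := by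
        rw [Fin.ext_iff]; simp only []; omega
      rw [heq]; exact hh
    · have hlt := jj.isLt
      refine ⟨⟨k - jj.1, by omega⟩, ?_⟩
      rw [mem_NWit_inrl]
      have hval : ((⟨k - jj.1, by omega⟩ : Fin (n + 2 * k + 3)) : ℕ) = k - jj.1 := rfl
      rw [hval]
      omega
    · have hlt := jj.isLt
      refine ⟨⟨k + n + 2 + jj.1, by omega⟩, ?_⟩
      rw [mem_NWit_inrr]
  · -- disjoint
    intro i j hne
    rw [Set.disjoint_left]
    rintro (x | jj | jj) hxi hxj
    · rw [mem_NWit_inl] at hxi hxj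
      obtain ⟨hj1, hk1, hxi⟩ := hxi
      obtain ⟨hj2, hk2, hxj⟩ := hxj
      have := huniq hxi hxj
      rw [Fin.ext_iff] at this
      simp only [] at this
      exact hne (by rw [Fin.ext_iff]; omega)
    · rw [mem_NWit_inrl] at hxi hxj
      exact hne (by rw [Fin.ext_iff]; omega)
    · rw [mem_NWit_inrr] at hxi hxj
      exact hne (by rw [Fin.ext_iff]; omega)

end Forward

end Stmt15Aux
namespace Stmt15Aux

open SimpleGraph

lemma forward_main {V : Type} [Finite V] {G : SimpleGraph V} {u v : V} {k : ℕ}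
    (h : PathContractFixed G u v k) :
    ∃ (W : Type) (P : SimpleGraph W), IsPathGraph P ∧
      KContractible (attachPaths G u v k) P k := by
  obtain ⟨n, Wit, hW, hcard, hends⟩ := h
  obtain ⟨Wit₀, hW₀, hu₀, hv₀⟩ : ∃ Wit₀, IsWitnessStructure G (pathGraph (n + 1)) Wit₀ ∧
      u ∈ Wit₀ 0 ∧ v ∈ Wit₀ (Fin.last n) := by
    rcases hends with ⟨hu, hv⟩ | ⟨hu, hv⟩
    · exact ⟨Wit, hW, hu, hv⟩
    · refine ⟨fun i => Wit i.rev, witness_rev hW, ?_, ?_⟩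
      · show u ∈ Wit (Fin.rev 0)
        rw [Fin.rev_zero]; exact hu
      · show v ∈ Wit (Fin.rev (Fin.last n))
        rw [Fin.rev_last]; exact hv
  have hNW := forward_witness (k := k) hW₀ hu₀ hv₀
  have hContr := contractsIn_of_witness (Nat.card (V ⊕ (Fin (k + 1) ⊕ Fin (k + 1)))) rfl hNW
  refine ⟨Fin (n + 2 * k + 3), pathGraph (n + 2 * k + 3),
    ⟨n + 2 * k + 3, ⟨RelIso.refl _⟩⟩, ?_⟩
  have hcV : Nat.card (V ⊕ (Fin (k + 1) ⊕ Fin (k + 1))) = Nat.card V + (2 * k + 2) := by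
    rw [Nat.card_sum, Nat.card_sum]
    simp only [Nat.card_eq_fintype_card, Fintype.card_fin]
    omega
  have hcW : Nat.card (Fin (n + 2 * k + 3)) = n + 2 * k + 3 := by
    simp [Nat.card_eq_fintype_card]
  refine ⟨Nat.card (V ⊕ (Fin (k + 1) ⊕ Fin (k + 1))) - Nat.card (Fin (n + 2 * k + 3)), ?_, hContr⟩
  omega

end Stmt15Aux
namespace Stmt15Aux

open SimpleGraph

lemma iso_witness {V W W' : Type} {G : SimpleGraph V} {H : SimpleGraph W} {H' : SimpleGraph W'}
    {Wit : W → Set V} (hW : IsWitnessStructure G H Wit) (e : H ≃g H') :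
    IsWitnessStructure G H' (fun i => Wit (e.symm i)) := by
  constructor
  · intro i; exact hW.connected _
  · intro h₁ h₂ hne
    have hne' : e.symm h₁ ≠ e.symm h₂ := fun hc => hne (by
      have := congrArg e hc
      rwa [e.apply_symm_apply, e.apply_symm_apply] at this)
    rw [← hW.adj _ _ hne']
    constructor
    · intro hadj
      exact e.symm.map_adj_iff.mpr hadj
    · intro hadj
      have := e.symm.map_adj_iff.mp hadj
      exact this
  · intro x
    obtain ⟨h, hh⟩ := hW.cover x
    refine ⟨e h, ?_⟩
    simp only [e.symm_apply_apply]
    exact hh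
  · intro h₁ h₂ hne
    exact hW.disjoint _ _ (fun hc => hne (by
      have := congrArg e hc
      rwa [e.apply_symm_apply, e.apply_symm_apply] at this))

lemma nat_ivt (f : ℕ → ℕ) : ∀ (r : ℕ),
    (∀ i, i < r → f (i + 1) = f i ∨ f (i + 1) = f i + 1 ∨ f i = f (i + 1) + 1) →
    ∀ c, min (f 0) (f r) ≤ c → c ≤ max (f 0) (f r) → ∃ i, i ≤ r ∧ f i = c := by
  intro r
  induction r with
  | zero => intro _ c h1 h2; exact ⟨0, le_refl 0, by omega⟩
  | succ r ih =>
    intro hstep c h1 h2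
    by_cases hc : min (f 0) (f r) ≤ c ∧ c ≤ max (f 0) (f r)
    · obtain ⟨i, hi, hfi⟩ := ih (fun i h => hstep i (by omega)) c hc.1 hc.2
      exact ⟨i, by omega, hfi⟩
    · rw [not_and_or] at hc
      have := hstep r (by omega)
      push_neg at hc
      refine ⟨r + 1, le_refl _, by omega⟩

lemma walk_ivt {V' : Type} {X : SimpleGraph V'} (f : V' → ℕ)
    (hstep : ∀ a b, X.Adj a b → f a = f b ∨ f a + 1 = f b ∨ f b + 1 = f a) {a b : V'}
    (p : X.Walk a b) :
    ∀ c, min (f a) (f b) ≤ c → c ≤ max (f a) (f b) → ∃ x ∈ p.support, f x = c := by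
  induction p with
  | nil =>
    rename_i z
    intro c h1 h2
    refine ⟨z, by simp, by omega⟩
  | @cons a' d b' hadj q ih =>
    intro c h1 h2
    by_cases hc : min (f d) (f b') ≤ c ∧ c ≤ max (f d) (f b')
    · obtain ⟨x, hx, hfx⟩ := ih c hc.1 hc.2
      exact ⟨x, by simp [hx], hfx⟩
    · rw [not_and_or] at hc
      push_neg at hc
      have := hstep a' d hadj
      exact ⟨a', by simp, by omega⟩

section Backward

variable {V : Type} {G : SimpleGraph V} {u v : V} {k m : ℕ}
  {Wit : Fin m → Set (V ⊕ (Fin (k + 1) ⊕ Fin (k + 1)))}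

lemma idx_step (hW : IsWitnessStructure (attachPaths G u v k) (pathGraph m) Wit)
    {a b : V ⊕ (Fin (k + 1) ⊕ Fin (k + 1))} (hab : (attachPaths G u v k).Adj a b) :
    (widx hW a).1 = (widx hW b).1 ∨ (widx hW a).1 + 1 = (widx hW b).1 ∨
      (widx hW b).1 + 1 = (widx hW a).1 := by
  by_cases h : widx hW a = widx hW b
  · left; rw [h]
  · have := (hW.adj _ _ h).mpr ⟨a, widx_mem hW a, b, widx_mem hW b, hab⟩
    rw [pathGraph_adj] at this
    tauto

lemma cv_u (hW : IsWitnessStructure (attachPaths G u v k) (pathGraph m) Wit) {i : Fin m}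
    {j : Fin (k + 1)} (hA : Sum.inr (Sum.inl j) ∈ Wit i) {x0 : V}
    (hx : Sum.inl x0 ∈ Wit i) : Sum.inl u ∈ Wit i := by
  have key : ∀ (a b : {z // z ∈ Wit i})
      (p : ((attachPaths G u v k).induce (Wit i)).Walk a b),
      (∃ j' : Fin (k + 1), a.1 = Sum.inr (Sum.inl j')) →
      (∃ x : V, b.1 = Sum.inl x) → Sum.inl u ∈ Wit i := by
    intro a b p
    induction p with
    | nil =>
      rintro ⟨j', hj⟩ ⟨x, hx'⟩
      rw [hj] at hx'
      exact absurd hx' (by simp)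
    | @cons a' c b' hadj q ih =>
      rintro ⟨j', hj⟩ hb
      have hHadj : (attachPaths G u v k).Adj a'.1 c.1 := hadj
      rw [hj] at hHadj
      rcases hc : c.1 with y | jj | jj
      · rw [hc, SimpleGraph.adj_comm, ap_adj_inl_inrl] at hHadj
        obtain ⟨rfl, -⟩ := hHadj
        have := c.2
        rwa [hc] at this
      · exact ih ⟨jj, hc⟩ hb
      · rw [hc] at hHadj
        exact absurd hHadj (ap_adj_inrl_inrr _ _ _ _)
  obtain ⟨p⟩ := (hW.connected i).preconnected ⟨_, hA⟩ ⟨_, hx⟩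
  exact key _ _ p ⟨j, rfl⟩ ⟨x0, rfl⟩

lemma cv_v (hW : IsWitnessStructure (attachPaths G u v k) (pathGraph m) Wit) {i : Fin m}
    {j : Fin (k + 1)} (hB : Sum.inr (Sum.inr j) ∈ Wit i) {x0 : V}
    (hx : Sum.inl x0 ∈ Wit i) : Sum.inl v ∈ Wit i := by
  have key : ∀ (a b : {z // z ∈ Wit i})
      (p : ((attachPaths G u v k).induce (Wit i)).Walk a b),
      (∃ j' : Fin (k + 1), a.1 = Sum.inr (Sum.inr j')) →
      (∃ x : V, b.1 = Sum.inl x) → Sum.inl v ∈ Wit i := by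
    intro a b p
    induction p with
    | nil =>
      rintro ⟨j', hj⟩ ⟨x, hx'⟩
      rw [hj] at hx'
      exact absurd hx' (by simp)
    | @cons a' c b' hadj q ih =>
      rintro ⟨j', hj⟩ hb
      have hHadj : (attachPaths G u v k).Adj a'.1 c.1 := hadj
      rw [hj] at hHadj
      rcases hc : c.1 with y | jj | jj
      · rw [hc, SimpleGraph.adj_comm, ap_adj_inl_inrr] at hHadj
        obtain ⟨rfl, -⟩ := hHadj
        have := c.2
        rwa [hc] at this
      · rw [hc, SimpleGraph.adj_comm] at hHadj
        exact absurd hHadj (ap_adj_inrl_inrr _ _ _ _)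
      · exact ih ⟨jj, hc⟩ hb
  obtain ⟨p⟩ := (hW.connected i).preconnected ⟨_, hB⟩ ⟨_, hx⟩
  exact key _ _ p ⟨j, rfl⟩ ⟨x0, rfl⟩

lemma pure_not_AB (hW : IsWitnessStructure (attachPaths G u v k) (pathGraph m) Wit) {i : Fin m}
    (hpure : ∀ x : V, Sum.inl x ∉ Wit i) {j j' : Fin (k + 1)}
    (hA : Sum.inr (Sum.inl j) ∈ Wit i) (hB : Sum.inr (Sum.inr j') ∈ Wit i) : False := by
  have key : ∀ (a b : {z // z ∈ Wit i})
      (p : ((attachPaths G u v k).induce (Wit i)).Walk a b),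
      (∃ jj : Fin (k + 1), a.1 = Sum.inr (Sum.inl jj)) →
      (∃ jj : Fin (k + 1), b.1 = Sum.inr (Sum.inr jj)) → False := by
    intro a b p
    induction p with
    | nil =>
      rintro ⟨jj, hj⟩ ⟨jj', hj'⟩
      rw [hj] at hj'
      simp at hj'
    | @cons a' c b' hadj q ih =>
      rintro ⟨jj, hj⟩ hb
      have hHadj : (attachPaths G u v k).Adj a'.1 c.1 := hadj
      rw [hj] at hHadj
      rcases hc : c.1 with y | j2 | j2
      · exact hpure y (hc ▸ c.2)
      · exact ih ⟨j2, hc⟩ hb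
      · rw [hc] at hHadj
        exact absurd hHadj (ap_adj_inrl_inrr _ _ _ _)
  obtain ⟨p⟩ := (hW.connected i).preconnected ⟨_, hA⟩ ⟨_, hB⟩
  exact key _ _ p ⟨j, rfl⟩ ⟨j', rfl⟩

end Backward

end Stmt15Aux
namespace Stmt15Aux

open SimpleGraph

section Backward2

variable {V : Type} {G : SimpleGraph V} {u v : V} {k m : ℕ}
  {Wit : Fin m → Set (V ⊕ (Fin (k + 1) ⊕ Fin (k + 1)))}

lemma chainA_ivt (hW : IsWitnessStructure (attachPaths G u v k) (pathGraph m) Wit)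
    (j : Fin (k + 1)) (c : ℕ)
    (h1 : min (widx hW (Sum.inl u)).1 (widx hW (Sum.inr (Sum.inl j))).1 ≤ c)
    (h2 : c ≤ max (widx hW (Sum.inl u)).1 (widx hW (Sum.inr (Sum.inl j))).1) :
    c = (widx hW (Sum.inl u)).1 ∨
      ∃ j' : Fin (k + 1), (widx hW (Sum.inr (Sum.inl j'))).1 = c := by
  classical
  have hjlt := j.isLt
  set chain : ℕ → (V ⊕ (Fin (k + 1) ⊕ Fin (k + 1))) := fun r =>
    if h : 1 ≤ r ∧ r ≤ k + 1 then Sum.inr (Sum.inl ⟨r - 1, by omega⟩) else Sum.inl u with hchain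
  have hc0 : chain 0 = Sum.inl u := by rw [hchain]; simp
  have hcj : chain (j.1 + 1) = Sum.inr (Sum.inl j) := by
    rw [hchain]
    simp only []
    rw [dif_pos ⟨by omega, by omega⟩]
    have he : (⟨j.1 + 1 - 1, by omega⟩ : Fin (k + 1)) = j := Fin.ext (by simp)
    rw [he]
  have hstepC : ∀ i, i < j.1 + 1 →
      (widx hW (chain (i + 1))).1 = (widx hW (chain i)).1 ∨
      (widx hW (chain (i + 1))).1 = (widx hW (chain i)).1 + 1 ∨
      (widx hW (chain i)).1 = (widx hW (chain (i + 1))).1 + 1 := by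
    intro i hi
    have hadj : (attachPaths G u v k).Adj (chain i) (chain (i + 1)) := by
      rcases Nat.eq_zero_or_pos i with rfl | hpos
      · rw [hc0, hchain]
        simp only []
        rw [dif_pos ⟨by omega, by omega⟩]
        rw [ap_adj_inl_inrl]
        exact ⟨rfl, Fin.ext (by simp)⟩
      · rw [hchain]
        simp only []
        rw [dif_pos ⟨by omega, by omega⟩, dif_pos ⟨by omega, by omega⟩]
        rw [ap_adj_inrl_inrl]
        left
        simp only []
        omega
    rcases idx_step hW hadj with h | h | h <;> omega
  obtain ⟨i, hile, hieq⟩ := nat_ivt (fun r => (widx hW (chain r)).1) (j.1 + 1) hstepC c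
    (by show min ((widx hW (chain 0)).1) ((widx hW (chain (j.1 + 1))).1) ≤ c
        rw [hc0, hcj]; exact h1)
    (by show c ≤ max ((widx hW (chain 0)).1) ((widx hW (chain (j.1 + 1))).1)
        rw [hc0, hcj]; exact h2)
  rcases Nat.eq_zero_or_pos i with rfl | hpos
  · left; rw [← hieq, hc0]
  · right
    refine ⟨⟨i - 1, by omega⟩, ?_⟩
    have : chain i = Sum.inr (Sum.inl ⟨i - 1, by omega⟩) := by
      rw [hchain]
      simp only []
      rw [dif_pos ⟨by omega, by omega⟩]
    rw [← this]
    exact hieq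

lemma chainB_ivt (hW : IsWitnessStructure (attachPaths G u v k) (pathGraph m) Wit)
    (j : Fin (k + 1)) (c : ℕ)
    (h1 : min (widx hW (Sum.inl v)).1 (widx hW (Sum.inr (Sum.inr j))).1 ≤ c)
    (h2 : c ≤ max (widx hW (Sum.inl v)).1 (widx hW (Sum.inr (Sum.inr j))).1) :
    c = (widx hW (Sum.inl v)).1 ∨
      ∃ j' : Fin (k + 1), (widx hW (Sum.inr (Sum.inr j'))).1 = c := by
  classical
  have hjlt := j.isLt
  set chain : ℕ → (V ⊕ (Fin (k + 1) ⊕ Fin (k + 1))) := fun r =>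
    if h : 1 ≤ r ∧ r ≤ k + 1 then Sum.inr (Sum.inr ⟨r - 1, by omega⟩) else Sum.inl v with hchain
  have hc0 : chain 0 = Sum.inl v := by rw [hchain]; simp
  have hcj : chain (j.1 + 1) = Sum.inr (Sum.inr j) := by
    rw [hchain]
    simp only []
    rw [dif_pos ⟨by omega, by omega⟩]
    have he : (⟨j.1 + 1 - 1, by omega⟩ : Fin (k + 1)) = j := Fin.ext (by simp)
    rw [he]
  have hstepC : ∀ i, i < j.1 + 1 →
      (widx hW (chain (i + 1))).1 = (widx hW (chain i)).1 ∨
      (widx hW (chain (i + 1))).1 = (widx hW (chain i)).1 + 1 ∨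
      (widx hW (chain i)).1 = (widx hW (chain (i + 1))).1 + 1 := by
    intro i hi
    have hadj : (attachPaths G u v k).Adj (chain i) (chain (i + 1)) := by
      rcases Nat.eq_zero_or_pos i with rfl | hpos
      · rw [hc0, hchain]
        simp only []
        rw [dif_pos ⟨by omega, by omega⟩]
        rw [ap_adj_inl_inrr]
        exact ⟨rfl, Fin.ext (by simp)⟩
      · rw [hchain]
        simp only []
        rw [dif_pos ⟨by omega, by omega⟩, dif_pos ⟨by omega, by omega⟩]
        rw [ap_adj_inrr_inrr]
        left
        simp only []
        omega
    rcases idx_step hW hadj with h | h | h <;> omega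
  obtain ⟨i, hile, hieq⟩ := nat_ivt (fun r => (widx hW (chain r)).1) (j.1 + 1) hstepC c
    (by show min ((widx hW (chain 0)).1) ((widx hW (chain (j.1 + 1))).1) ≤ c
        rw [hc0, hcj]; exact h1)
    (by show c ≤ max ((widx hW (chain 0)).1) ((widx hW (chain (j.1 + 1))).1)
        rw [hc0, hcj]; exact h2)
  rcases Nat.eq_zero_or_pos i with rfl | hpos
  · left; rw [← hieq, hc0]
  · right
    refine ⟨⟨i - 1, by omega⟩, ?_⟩
    have : chain i = Sum.inr (Sum.inr ⟨i - 1, by omega⟩) := by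
      rw [hchain]
      simp only []
      rw [dif_pos ⟨by omega, by omega⟩]
    rw [← this]
    exact hieq

end Backward2

end Stmt15Aux
namespace Stmt15Aux

open SimpleGraph

lemma backward_core {V : Type} [Finite V] {G : SimpleGraph V} (hconn : G.Connected) {u v : V}
    {k m nc : ℕ} (hnck : nc ≤ k)
    {Wit : Fin m → Set (V ⊕ (Fin (k + 1) ⊕ Fin (k + 1)))}
    (hW : IsWitnessStructure (attachPaths G u v k) (pathGraph m) Wit)
    (hcardVH : Nat.card (V ⊕ (Fin (k + 1) ⊕ Fin (k + 1))) = m + nc) :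
    PathContractFixed G u v k := by
  classical
  haveI : Nonempty V := hconn.nonempty
  haveI := Fintype.ofFinite V
  have hSgne : (Finset.image (fun x : V => (widx hW (Sum.inl x)).1) Finset.univ).Nonempty :=
    ⟨(widx hW (Sum.inl (Classical.arbitrary V))).1,
      Finset.mem_image_of_mem _ (Finset.mem_univ _)⟩
  set g₁ := (Finset.image (fun x : V => (widx hW (Sum.inl x)).1) Finset.univ).min' hSgne
    with hg₁def
  set g₂ := (Finset.image (fun x : V => (widx hW (Sum.inl x)).1) Finset.univ).max' hSgne
    with hg₂def
  obtain ⟨x₁, -, hx₁⟩ := Finset.mem_image.mp (Finset.min'_mem _ hSgne)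
  obtain ⟨x₂, -, hx₂⟩ := Finset.mem_image.mp (Finset.max'_mem _ hSgne)
  rw [← hg₁def] at hx₁
  rw [← hg₂def] at hx₂
  have hg₁le : ∀ x : V, g₁ ≤ (widx hW (Sum.inl x)).1 := fun x => by
    rw [hg₁def]
    exact Finset.min'_le _ _
      (Finset.mem_image_of_mem (fun x : V => (widx hW (Sum.inl x)).1) (Finset.mem_univ x))
  have hg₂ge : ∀ x : V, (widx hW (Sum.inl x)).1 ≤ g₂ := fun x => by
    rw [hg₂def]
    exact Finset.le_max' _ _
      (Finset.mem_image_of_mem (fun x : V => (widx hW (Sum.inl x)).1) (Finset.mem_univ x))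
  have hg₁₂ : g₁ ≤ g₂ := by rw [← hx₁]; exact hg₂ge x₁
  have hg₂m : g₂ < m := by rw [← hx₂]; exact (widx hW _).isLt
  -- intermediate value property for G-indices
  have hIVT : ∀ c, g₁ ≤ c → c ≤ g₂ → ∃ x : V, (widx hW (Sum.inl x)).1 = c := by
    intro c hc1 hc2
    obtain ⟨p⟩ := hconn.preconnected x₁ x₂
    obtain ⟨x, -, hx⟩ := walk_ivt (fun x : V => (widx hW (Sum.inl x)).1)
      (fun x y hxy => idx_step hW ((ap_adj_inl_inl G u v k).mpr hxy)) p c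
      (by show min ((widx hW (Sum.inl x₁)).1) ((widx hW (Sum.inl x₂)).1) ≤ c; omega)
      (by show c ≤ max ((widx hW (Sum.inl x₁)).1) ((widx hW (Sum.inl x₂)).1); omega)
    exact ⟨x, hx⟩
  have hnonpure : ∀ i : Fin m, g₁ ≤ i.1 → i.1 ≤ g₂ → ∃ x : V, Sum.inl x ∈ Wit i := by
    intro i hi1 hi2
    obtain ⟨x, hx⟩ := hIVT i.1 hi1 hi2
    have : widx hW (Sum.inl x) = i := Fin.ext hx
    exact ⟨x, this ▸ widx_mem hW (Sum.inl x)⟩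
  have hpure : ∀ i : Fin m, (i.1 < g₁ ∨ g₂ < i.1) → ∀ x : V, Sum.inl x ∉ Wit i := by
    intro i hi x hx
    have h1 := hg₁le x
    have h2 := hg₂ge x
    rw [widx_eq hW hx] at h1 h2
    omega
  -- counting: not all of the u-pendant path lies in the witness set of u
  have hAj : ∃ j : Fin (k + 1), widx hW (Sum.inr (Sum.inl j)) ≠ widx hW (Sum.inl u) := by
    by_contra hcon'
    push_neg at hcon'
    have hall : ∀ j : Fin (k + 1), Sum.inr (Sum.inl j) ∈ Wit (widx hW (Sum.inl u)) := by
      intro j; rw [← hcon' j]; exact widx_mem hW _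
    have hrep : ∀ i : Fin m, ∃ z, z ∈ Wit i := fun i => witness_nonempty hW i
    choose rep hrep' using hrep
    set t := widx hW (Sum.inl u) with ht
    set φ : (Fin (k + 2) ⊕ {i : Fin m // i ≠ t}) → (V ⊕ (Fin (k + 1) ⊕ Fin (k + 1))) :=
      Sum.elim
        (fun j => if h : j.1 < k + 1 then Sum.inr (Sum.inl ⟨j.1, h⟩) else Sum.inl u)
        (fun i => rep i.1) with hφ
    have hφmem : ∀ j : Fin (k + 2), φ (Sum.inl j) ∈ Wit t := by
      intro j
      rw [hφ]
      simp only [Sum.elim_inl]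
      by_cases h : j.1 < k + 1
      · rw [dif_pos h]; exact hall _
      · rw [dif_neg h]; exact widx_mem hW _
    have hφinj : Function.Injective φ := by
      rintro (j | i) (j' | i') heq
      · rw [hφ] at heq
        simp only [Sum.elim_inl] at heq
        by_cases h : j.1 < k + 1 <;> by_cases h' : j'.1 < k + 1
        · rw [dif_pos h, dif_pos h'] at heq
          have h2 := Sum.inl_injective (Sum.inr_injective heq)
          have h3 : j.1 = j'.1 := by have := congrArg Fin.val h2; exact this
          exact congrArg _ (Fin.ext h3)
        · rw [dif_pos h, dif_neg h'] at heq; exact absurd heq (by simp)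
        · rw [dif_neg h, dif_pos h'] at heq; exact absurd heq (by simp)
        · have : j.1 = j'.1 := by have := j.isLt; have := j'.isLt; omega
          exact congrArg _ (Fin.ext this)
      · exfalso
        have h1 : φ (Sum.inl j) ∈ Wit t := hφmem j
        have h2 : φ (Sum.inr i') ∈ Wit i'.1 := hrep' i'.1
        rw [heq] at h1
        exact i'.2 (mem_unique hW h2 h1)
      · exfalso
        have h1 : φ (Sum.inl j') ∈ Wit t := hφmem j'
        have h2 : φ (Sum.inr i) ∈ Wit i.1 := hrep' i.1
        rw [← heq] at h1
        exact i.2 (mem_unique hW h2 h1)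
      · have h1 : φ (Sum.inr i) ∈ Wit i.1 := hrep' i.1
        have h2 : φ (Sum.inr i') ∈ Wit i'.1 := hrep' i'.1
        rw [heq] at h1
        exact congrArg _ (Subtype.ext (mem_unique hW h1 h2))
    have hcard1 := Nat.card_le_card_of_injective φ hφinj
    rw [Nat.card_sum] at hcard1
    have e1 : Nat.card (Fin (k + 2)) = k + 2 := by simp [Nat.card_eq_fintype_card]
    have e3 : Nat.card (Fin m) = m := by simp [Nat.card_eq_fintype_card]
    have e2 := card_subtype_ne (V := Fin m) t
    omega
  have hBj : ∃ j : Fin (k + 1), widx hW (Sum.inr (Sum.inr j)) ≠ widx hW (Sum.inl v) := by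
    by_contra hcon'
    push_neg at hcon'
    have hall : ∀ j : Fin (k + 1), Sum.inr (Sum.inr j) ∈ Wit (widx hW (Sum.inl v)) := by
      intro j; rw [← hcon' j]; exact widx_mem hW _
    have hrep : ∀ i : Fin m, ∃ z, z ∈ Wit i := fun i => witness_nonempty hW i
    choose rep hrep' using hrep
    set t := widx hW (Sum.inl v) with ht
    set φ : (Fin (k + 2) ⊕ {i : Fin m // i ≠ t}) → (V ⊕ (Fin (k + 1) ⊕ Fin (k + 1))) :=
      Sum.elim
        (fun j => if h : j.1 < k + 1 then Sum.inr (Sum.inr ⟨j.1, h⟩) else Sum.inl v)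
        (fun i => rep i.1) with hφ
    have hφmem : ∀ j : Fin (k + 2), φ (Sum.inl j) ∈ Wit t := by
      intro j
      rw [hφ]
      simp only [Sum.elim_inl]
      by_cases h : j.1 < k + 1
      · rw [dif_pos h]; exact hall _
      · rw [dif_neg h]; exact widx_mem hW _
    have hφinj : Function.Injective φ := by
      rintro (j | i) (j' | i') heq
      · rw [hφ] at heq
        simp only [Sum.elim_inl] at heq
        by_cases h : j.1 < k + 1 <;> by_cases h' : j'.1 < k + 1
        · rw [dif_pos h, dif_pos h'] at heq
          have h2 := Sum.inr_injective (Sum.inr_injective heq)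
          have h3 : j.1 = j'.1 := by have := congrArg Fin.val h2; exact this
          exact congrArg _ (Fin.ext h3)
        · rw [dif_pos h, dif_neg h'] at heq; exact absurd heq (by simp)
        · rw [dif_neg h, dif_pos h'] at heq; exact absurd heq (by simp)
        · have : j.1 = j'.1 := by have := j.isLt; have := j'.isLt; omega
          exact congrArg _ (Fin.ext this)
      · exfalso
        have h1 : φ (Sum.inl j) ∈ Wit t := hφmem j
        have h2 : φ (Sum.inr i') ∈ Wit i'.1 := hrep' i'.1
        rw [heq] at h1
        exact i'.2 (mem_unique hW h2 h1)
      · exfalso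
        have h1 : φ (Sum.inl j') ∈ Wit t := hφmem j'
        have h2 : φ (Sum.inr i) ∈ Wit i.1 := hrep' i.1
        rw [← heq] at h1
        exact i.2 (mem_unique hW h2 h1)
      · have h1 : φ (Sum.inr i) ∈ Wit i.1 := hrep' i.1
        have h2 : φ (Sum.inr i') ∈ Wit i'.1 := hrep' i'.1
        rw [heq] at h1
        exact congrArg _ (Subtype.ext (mem_unique hW h1 h2))
    have hcard1 := Nat.card_le_card_of_injective φ hφinj
    rw [Nat.card_sum] at hcard1
    have e1 : Nat.card (Fin (k + 2)) = k + 2 := by simp [Nat.card_eq_fintype_card]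
    have e3 : Nat.card (Fin m) = m := by simp [Nat.card_eq_fintype_card]
    have e2 := card_subtype_ne (V := Fin m) t
    omega
  -- side lemmas
  have hsideA : ∀ j : Fin (k + 1),
      ((widx hW (Sum.inr (Sum.inl j))).1 < g₁ → (widx hW (Sum.inl u)).1 = g₁) ∧
      (g₂ < (widx hW (Sum.inr (Sum.inl j))).1 → (widx hW (Sum.inl u)).1 = g₂) := by
    intro j
    have hcore : ∀ c, g₁ ≤ c → c ≤ g₂ →
        min (widx hW (Sum.inl u)).1 (widx hW (Sum.inr (Sum.inl j))).1 ≤ c →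
        c ≤ max (widx hW (Sum.inl u)).1 (widx hW (Sum.inr (Sum.inl j))).1 →
        (widx hW (Sum.inl u)).1 = c := by
      intro c hc1 hc2 hm1 hm2
      rcases chainA_ivt hW j c hm1 hm2 with h | ⟨j', hj'⟩
      · omega
      · obtain ⟨x, hx⟩ := hnonpure (widx hW (Sum.inr (Sum.inl j'))) (by omega) (by omega)
        have hu' : Sum.inl u ∈ Wit (widx hW (Sum.inr (Sum.inl j'))) :=
          cv_u hW (widx_mem hW _) hx
        rw [widx_eq hW hu']
        exact hj'
    refine ⟨fun hlt => ?_, fun hlt => ?_⟩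
    · have h0 := hg₁le u
      exact hcore g₁ (le_refl _) hg₁₂ (by omega) (by omega)
    · have h0 := hg₂ge u
      exact hcore g₂ hg₁₂ (le_refl _) (by omega) (by omega)
  have hsideB : ∀ j : Fin (k + 1),
      ((widx hW (Sum.inr (Sum.inr j))).1 < g₁ → (widx hW (Sum.inl v)).1 = g₁) ∧
      (g₂ < (widx hW (Sum.inr (Sum.inr j))).1 → (widx hW (Sum.inl v)).1 = g₂) := by
    intro j
    have hcore : ∀ c, g₁ ≤ c → c ≤ g₂ →
        min (widx hW (Sum.inl v)).1 (widx hW (Sum.inr (Sum.inr j))).1 ≤ c →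
        c ≤ max (widx hW (Sum.inl v)).1 (widx hW (Sum.inr (Sum.inr j))).1 →
        (widx hW (Sum.inl v)).1 = c := by
      intro c hc1 hc2 hm1 hm2
      rcases chainB_ivt hW j c hm1 hm2 with h | ⟨j', hj'⟩
      · omega
      · obtain ⟨x, hx⟩ := hnonpure (widx hW (Sum.inr (Sum.inr j'))) (by omega) (by omega)
        have hv' : Sum.inl v ∈ Wit (widx hW (Sum.inr (Sum.inr j'))) :=
          cv_v hW (widx_mem hW _) hx
        rw [widx_eq hW hv']
        exact hj'
    refine ⟨fun hlt => ?_, fun hlt => ?_⟩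
    · have h0 := hg₁le v
      exact hcore g₁ (le_refl _) hg₁₂ (by omega) (by omega)
    · have h0 := hg₂ge v
      exact hcore g₂ hg₁₂ (le_refl _) (by omega) (by omega)
  obtain ⟨jA, hjA⟩ := hAj
  obtain ⟨jB, hjB⟩ := hBj
  have hsA : (widx hW (Sum.inr (Sum.inl jA))).1 < g₁ ∨ g₂ < (widx hW (Sum.inr (Sum.inl jA))).1 := by
    by_contra hc
    push_neg at hc
    obtain ⟨x, hx⟩ := hnonpure _ hc.1 hc.2
    have := cv_u hW (widx_mem hW (Sum.inr (Sum.inl jA))) hx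
    exact hjA (widx_eq hW this).symm
  have hsB : (widx hW (Sum.inr (Sum.inr jB))).1 < g₁ ∨ g₂ < (widx hW (Sum.inr (Sum.inr jB))).1 := by
    by_contra hc
    push_neg at hc
    obtain ⟨x, hx⟩ := hnonpure _ hc.1 hc.2
    have := cv_v hW (widx_mem hW (Sum.inr (Sum.inr jB))) hx
    exact hjB (widx_eq hW this).symm
  have htu : (widx hW (Sum.inl u)).1 = g₁ ∨ (widx hW (Sum.inl u)).1 = g₂ := by
    rcases hsA with h | h
    · exact Or.inl ((hsideA jA).1 h)
    · exact Or.inr ((hsideA jA).2 h)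
  have htv : (widx hW (Sum.inl v)).1 = g₁ ∨ (widx hW (Sum.inl v)).1 = g₂ := by
    rcases hsB with h | h
    · exact Or.inl ((hsideB jB).1 h)
    · exact Or.inr ((hsideB jB).2 h)
  -- homogeneity machinery
  have hedge : ∀ c : ℕ, ∀ hc : c + 1 < m, ∃ a ∈ Wit ⟨c, by omega⟩, ∃ b ∈ Wit ⟨c + 1, hc⟩,
      (attachPaths G u v k).Adj a b := by
    intro c hc
    refine (hW.adj ⟨c, by omega⟩ ⟨c + 1, hc⟩
      (fun hcc => by have h2 : c = c + 1 := congrArg Fin.val hcc; omega)).mp ?_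
    rw [pathGraph_adj]
    exact Or.inl rfl
  have hAstep : ∀ c : ℕ, ∀ hc : c + 1 < m, (c < g₁ ∨ g₂ < c) → (c + 1 < g₁ ∨ g₂ < c + 1) →
      (∃ j : Fin (k + 1), Sum.inr (Sum.inl j) ∈ Wit ⟨c, by omega⟩) →
      ∃ j : Fin (k + 1), Sum.inr (Sum.inl j) ∈ Wit ⟨c + 1, hc⟩ := by
    rintro c hc hout1 hout2 ⟨j, hj⟩
    obtain ⟨a, ha, b, hb, hab⟩ := hedge c hc
    rcases a with x | ja | ja
    · exact absurd ha (hpure _ hout1 x)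
    · rcases b with y | jb | jb
      · exact absurd hb (hpure _ hout2 y)
      · exact ⟨jb, hb⟩
      · exact absurd hab (ap_adj_inrl_inrr _ _ _ _)
    · exact (pure_not_AB hW (hpure _ hout1) hj ha).elim
  have hBstep : ∀ c : ℕ, ∀ hc : c + 1 < m, (c < g₁ ∨ g₂ < c) → (c + 1 < g₁ ∨ g₂ < c + 1) →
      (∃ j : Fin (k + 1), Sum.inr (Sum.inr j) ∈ Wit ⟨c, by omega⟩) →
      ∃ j : Fin (k + 1), Sum.inr (Sum.inr j) ∈ Wit ⟨c + 1, hc⟩ := by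
    rintro c hc hout1 hout2 ⟨j, hj⟩
    obtain ⟨a, ha, b, hb, hab⟩ := hedge c hc
    rcases a with x | ja | ja
    · exact absurd ha (hpure _ hout1 x)
    · exact (pure_not_AB hW (hpure _ hout1) ha hj).elim
    · rcases b with y | jb | jb
      · exact absurd hb (hpure _ hout2 y)
      · rw [SimpleGraph.adj_comm] at hab
        exact absurd hab (ap_adj_inrl_inrr _ _ _ _)
      · exact ⟨jb, hb⟩
  have hAprop : ∀ (d c : ℕ), ∀ hcd : c + d < m, (∀ e, c ≤ e → e ≤ c + d → (e < g₁ ∨ g₂ < e)) →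
      (∃ j : Fin (k + 1), Sum.inr (Sum.inl j) ∈ Wit ⟨c, by omega⟩) →
      ∃ j : Fin (k + 1), Sum.inr (Sum.inl j) ∈ Wit ⟨c + d, hcd⟩ := by
    intro d
    induction d with
    | zero => intro c h1 h2 h3; exact h3
    | succ d ih =>
      intro c h1 h2 h3
      have hmid := ih c (by omega) (fun e he1 he2 => h2 e he1 (by omega)) h3
      exact hAstep (c + d) (by omega) (h2 _ (by omega) (by omega)) (h2 _ (by omega) (by omega))
        hmid
  have hBprop : ∀ (d c : ℕ), ∀ hcd : c + d < m, (∀ e, c ≤ e → e ≤ c + d → (e < g₁ ∨ g₂ < e)) →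
      (∃ j : Fin (k + 1), Sum.inr (Sum.inr j) ∈ Wit ⟨c, by omega⟩) →
      ∃ j : Fin (k + 1), Sum.inr (Sum.inr j) ∈ Wit ⟨c + d, hcd⟩ := by
    intro d
    induction d with
    | zero => intro c h1 h2 h3; exact h3
    | succ d ih =>
      intro c h1 h2 h3
      have hmid := ih c (by omega) (fun e he1 he2 => h2 e he1 (by omega)) h3
      exact hBstep (c + d) (by omega) (h2 _ (by omega) (by omega)) (h2 _ (by omega) (by omega))
        hmid
  -- membership of the chosen pendant vertices at their own indices
  have hmemA : Sum.inr (Sum.inl jA) ∈ Wit ⟨(widx hW (Sum.inr (Sum.inl jA))).1,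
      (widx hW (Sum.inr (Sum.inl jA))).isLt⟩ := by
    have h := widx_mem hW (Sum.inr (Sum.inl jA))
    have he : (⟨(widx hW (Sum.inr (Sum.inl jA))).1, (widx hW (Sum.inr (Sum.inl jA))).isLt⟩
        : Fin m) = widx hW (Sum.inr (Sum.inl jA)) := Fin.ext rfl
    rw [he]
    exact h
  have hmemB : Sum.inr (Sum.inr jB) ∈ Wit ⟨(widx hW (Sum.inr (Sum.inr jB))).1,
      (widx hW (Sum.inr (Sum.inr jB))).isLt⟩ := by
    have h := widx_mem hW (Sum.inr (Sum.inr jB))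
    have he : (⟨(widx hW (Sum.inr (Sum.inr jB))).1, (widx hW (Sum.inr (Sum.inr jB))).isLt⟩
        : Fin m) = widx hW (Sum.inr (Sum.inr jB)) := Fin.ext rfl
    rw [he]
    exact h
  -- contradiction from both A-pure and B-pure indices on the same side
  have hABcontra : ∀ cA cB : ℕ, ∀ hcA : cA < m, ∀ hcB : cB < m,
      (∀ e, min cA cB ≤ e → e ≤ max cA cB → (e < g₁ ∨ g₂ < e)) →
      (∃ j : Fin (k + 1), Sum.inr (Sum.inl j) ∈ Wit ⟨cA, hcA⟩) →
      (∃ j : Fin (k + 1), Sum.inr (Sum.inr j) ∈ Wit ⟨cB, hcB⟩) → False := by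
    intro cA cB hcA hcB hout hA hB
    rcases le_or_gt cA cB with hle | hlt'
    · obtain ⟨j', hj'⟩ := hAprop (cB - cA) cA (by omega)
        (fun e h1 h2 => hout e (by omega) (by omega)) hA
      have he : (⟨cA + (cB - cA), by omega⟩ : Fin m) = ⟨cB, hcB⟩ :=
        Fin.ext (show cA + (cB - cA) = cB by omega)
      rw [he] at hj'
      obtain ⟨jb, hjb⟩ := hB
      exact pure_not_AB hW (hpure ⟨cB, hcB⟩ (hout cB (by omega) (by omega))) hj' hjb
    · obtain ⟨j', hj'⟩ := hBprop (cA - cB) cB (by omega)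
        (fun e h1 h2 => hout e (by omega) (by omega)) hB
      have he : (⟨cB + (cA - cB), by omega⟩ : Fin m) = ⟨cA, hcA⟩ :=
        Fin.ext (show cB + (cA - cB) = cA by omega)
      rw [he] at hj'
      obtain ⟨ja, hja⟩ := hA
      exact pure_not_AB hW (hpure ⟨cA, hcA⟩ (hout cA (by omega) (by omega))) hja hj'
  -- distinctness of endpoint indices
  have hdistinct : g₁ < g₂ → (widx hW (Sum.inl u)).1 ≠ (widx hW (Sum.inl v)).1 := by
    intro hglt heq
    rcases htu with hu1 | hu2
    · -- tu = tv = g₁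
      have hv1 : (widx hW (Sum.inl v)).1 = g₁ := by omega
      rcases Nat.lt_or_ge (g₂ + 1) m with hm1 | hm1
      · obtain ⟨z, hz⟩ := witness_nonempty hW ⟨g₂ + 1, hm1⟩
        rcases z with x | jz | jz
        · exact hpure ⟨g₂ + 1, hm1⟩ (Or.inr (Nat.lt_succ_self g₂)) x hz
        · have hidx : (widx hW (Sum.inr (Sum.inl jz))).1 = g₂ + 1 :=
            congrArg Fin.val (widx_eq hW hz)
          have := (hsideA jz).2 (by omega)
          omega
        · have hidx : (widx hW (Sum.inr (Sum.inr jz))).1 = g₂ + 1 :=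
            congrArg Fin.val (widx_eq hW hz)
          have := (hsideB jz).2 (by omega)
          omega
      · -- m = g₂ + 1 : all pure indices are below g₁
        have hsA' : (widx hW (Sum.inr (Sum.inl jA))).1 < g₁ := by
          have := (widx hW (Sum.inr (Sum.inl jA))).isLt
          rcases hsA with h | h
          · exact h
          · omega
        have hsB' : (widx hW (Sum.inr (Sum.inr jB))).1 < g₁ := by
          have := (widx hW (Sum.inr (Sum.inr jB))).isLt
          rcases hsB with h | h
          · exact h
          · omega
        exact hABcontra _ _ (widx hW _).isLt (widx hW _).isLt
          (fun e h1 h2 => Or.inl (by omega)) ⟨jA, hmemA⟩ ⟨jB, hmemB⟩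
    · -- tu = tv = g₂
      have hv2 : (widx hW (Sum.inl v)).1 = g₂ := by omega
      rcases Nat.eq_zero_or_pos g₁ with hg0 | hg0
      · -- g₁ = 0 : all pure indices are above g₂
        have hsA' : g₂ < (widx hW (Sum.inr (Sum.inl jA))).1 := by
          rcases hsA with h | h
          · omega
          · exact h
        have hsB' : g₂ < (widx hW (Sum.inr (Sum.inr jB))).1 := by
          rcases hsB with h | h
          · omega
          · exact h
        exact hABcontra _ _ (widx hW _).isLt (widx hW _).isLt
          (fun e h1 h2 => Or.inr (by omega)) ⟨jA, hmemA⟩ ⟨jB, hmemB⟩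
      · obtain ⟨z, hz⟩ := witness_nonempty hW ⟨g₁ - 1, by omega⟩
        rcases z with x | jz | jz
        · exact hpure ⟨g₁ - 1, by omega⟩ (Or.inl (Nat.sub_lt hg0 Nat.one_pos)) x hz
        · have hidx : (widx hW (Sum.inr (Sum.inl jz))).1 = g₁ - 1 :=
            congrArg Fin.val (widx_eq hW hz)
          have := (hsideA jz).1 (by omega)
          omega
        · have hidx : (widx hW (Sum.inr (Sum.inr jz))).1 = g₁ - 1 :=
            congrArg Fin.val (widx_eq hW hz)
          have := (hsideB jz).1 (by omega)
          omega
  -- helpers for witness sets in the middle range containing pendant vertices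
  have hcontainA : ∀ I : Fin m, g₁ ≤ I.1 → I.1 ≤ g₂ → ∀ j : Fin (k + 1),
      Sum.inr (Sum.inl j) ∈ Wit I → Sum.inl u ∈ Wit I := by
    intro I h1 h2 j hj
    obtain ⟨x, hx⟩ := hnonpure I h1 h2
    exact cv_u hW hj hx
  have hcontainB : ∀ I : Fin m, g₁ ≤ I.1 → I.1 ≤ g₂ → ∀ j : Fin (k + 1),
      Sum.inr (Sum.inr j) ∈ Wit I → Sum.inl v ∈ Wit I := by
    intro I h1 h2 j hj
    obtain ⟨x, hx⟩ := hnonpure I h1 h2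
    exact cv_v hW hj hx
  -- the final witness structure
  refine ⟨g₂ - g₁, fun i => {x : V | Sum.inl x ∈ Wit ⟨g₁ + i.1, by have := i.isLt; omega⟩},
    ⟨?_, ?_, ?_, ?_⟩, ?_, ?_⟩
  · -- connected
    intro i
    have hlt : g₁ + i.1 < m := by have := i.isLt; omega
    show (G.induce {x : V | Sum.inl x ∈ Wit ⟨g₁ + i.1, hlt⟩}).Connected
    set I : Fin m := ⟨g₁ + i.1, hlt⟩ with hI
    set S : Set V := {x : V | Sum.inl x ∈ Wit I} with hS
    have hb1 : g₁ ≤ I.1 := Nat.le_add_right _ _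
    have hb2 : I.1 ≤ g₂ := by show g₁ + i.1 ≤ g₂; have := i.isLt; omega
    obtain ⟨x0, hx0⟩ := hnonpure I hb1 hb2
    have hπ : ∀ z : {z // z ∈ Wit I}, ∃ p : {x // x ∈ S},
        (∀ x : V, z.1 = Sum.inl x → p.1 = x) ∧
        (∀ j : Fin (k + 1), z.1 = Sum.inr (Sum.inl j) → p.1 = u) ∧
        (∀ j : Fin (k + 1), z.1 = Sum.inr (Sum.inr j) → p.1 = v) := by
      intro z
      rcases hz : z.1 with x | j | j
      · refine ⟨⟨x, show Sum.inl x ∈ Wit I from hz ▸ z.2⟩, ?_, ?_, ?_⟩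
        · intro x' hx'
          exact Sum.inl_injective hx'
        · intro j hj; simp at hj
        · intro j hj; simp at hj
      · have hu' : Sum.inl u ∈ Wit I := hcontainA I hb1 hb2 j (hz ▸ z.2)
        refine ⟨⟨u, show Sum.inl u ∈ Wit I from hu'⟩, ?_, ?_, ?_⟩
        · intro x' hx'; simp at hx'
        · intro j' hj; exact rfl
        · intro j' hj; simp at hj
      · have hv' : Sum.inl v ∈ Wit I := hcontainB I hb1 hb2 j (hz ▸ z.2)
        refine ⟨⟨v, show Sum.inl v ∈ Wit I from hv'⟩, ?_, ?_, ?_⟩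
        · intro x' hx'; simp at hx'
        · intro j' hj; simp at hj
        · intro j' hj; exact rfl
    choose π hπ1 hπ2 hπ3 using hπ
    have hf : ∀ z w : {z // z ∈ Wit I},
        ((attachPaths G u v k).induce (Wit I)).Adj z w →
        (G.induce S).Reachable (π z) (π w) := by
      intro z w hzw
      have hadj : (attachPaths G u v k).Adj z.1 w.1 := hzw
      rcases hz : z.1 with x | j | j <;> rcases hw : w.1 with y | j' | j'
      · rw [hz, hw, ap_adj_inl_inl] at hadj
        refine Adj.reachable ?_
        rw [induce_adj_iff, hπ1 z x hz, hπ1 w y hw]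
        exact hadj
      · rw [hz, hw, ap_adj_inl_inrl] at hadj
        have he : π z = π w := Subtype.ext (by rw [hπ1 z x hz, hπ2 w j' hw]; exact hadj.1)
        rw [he]
      · rw [hz, hw, ap_adj_inl_inrr] at hadj
        have he : π z = π w := Subtype.ext (by rw [hπ1 z x hz, hπ3 w j' hw]; exact hadj.1)
        rw [he]
      · rw [hz, hw, SimpleGraph.adj_comm, ap_adj_inl_inrl] at hadj
        have he : π z = π w := Subtype.ext (by rw [hπ2 z j hz, hπ1 w y hw]; exact hadj.1.symm)
        rw [he]
      · have he : π z = π w := Subtype.ext (by rw [hπ2 z j hz, hπ2 w j' hw])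
        rw [he]
      · rw [hz, hw] at hadj
        exact absurd hadj (ap_adj_inrl_inrr _ _ _ _)
      · rw [hz, hw, SimpleGraph.adj_comm, ap_adj_inl_inrr] at hadj
        have he : π z = π w := Subtype.ext (by rw [hπ3 z j hz, hπ1 w y hw]; exact hadj.1.symm)
        rw [he]
      · rw [hz, hw, SimpleGraph.adj_comm] at hadj
        exact absurd hadj (ap_adj_inrl_inrr _ _ _ _)
      · have he : π z = π w := Subtype.ext (by rw [hπ3 z j hz, hπ3 w j' hw])
        rw [he]
    haveI : Nonempty {x // x ∈ S} := ⟨⟨x0, hx0⟩⟩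
    refine ⟨fun p q => ?_⟩
    have hzp : Sum.inl p.1 ∈ Wit I := p.2
    have hzq : Sum.inl q.1 ∈ Wit I := q.2
    have hp' : π ⟨Sum.inl p.1, hzp⟩ = p := Subtype.ext (hπ1 _ p.1 rfl)
    have hq' : π ⟨Sum.inl q.1, hzq⟩ = q := Subtype.ext (hπ1 _ q.1 rfl)
    have hr := reachable_map' π hf
      ((hW.connected I).preconnected ⟨Sum.inl p.1, hzp⟩ ⟨Sum.inl q.1, hzq⟩)
    rwa [hp', hq'] at hr
  · -- adj
    intro i j hne
    have hlti : g₁ + i.1 < m := by have := i.isLt; omega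
    have hltj : g₁ + j.1 < m := by have := j.isLt; omega
    set I₁ : Fin m := ⟨g₁ + i.1, hlti⟩ with hI₁
    set I₂ : Fin m := ⟨g₁ + j.1, hltj⟩ with hI₂
    have hb1i : g₁ ≤ I₁.1 := Nat.le_add_right _ _
    have hb2i : I₁.1 ≤ g₂ := by show g₁ + i.1 ≤ g₂; have := i.isLt; omega
    have hb1j : g₁ ≤ I₂.1 := Nat.le_add_right _ _
    have hb2j : I₂.1 ≤ g₂ := by show g₁ + j.1 ≤ g₂; have := j.isLt; omega
    have hI₁₂ : I₁ ≠ I₂ := by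
      intro hc
      have h2 : g₁ + i.1 = g₁ + j.1 := congrArg Fin.val hc
      exact hne (Fin.ext (by omega))
    constructor
    · intro hadj
      have hadj' : (pathGraph m).Adj I₁ I₂ := by
        rw [pathGraph_adj] at hadj ⊢
        show g₁ + i.1 + 1 = g₁ + j.1 ∨ g₁ + j.1 + 1 = g₁ + i.1
        omega
      obtain ⟨a, ha, b, hb, hab⟩ := (hW.adj I₁ I₂ hI₁₂).mp hadj'
      rcases a with x | ja | ja <;> rcases b with y | jb | jb
      · exact ⟨x, ha, y, hb, (ap_adj_inl_inl G u v k).mp hab⟩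
      · rw [ap_adj_inl_inrl] at hab
        rw [hab.1] at ha
        have h1 : Sum.inl u ∈ Wit I₂ := hcontainA I₂ hb1j hb2j jb hb
        exact absurd (mem_unique hW ha h1) hI₁₂
      · rw [ap_adj_inl_inrr] at hab
        rw [hab.1] at ha
        have h1 : Sum.inl v ∈ Wit I₂ := hcontainB I₂ hb1j hb2j jb hb
        exact absurd (mem_unique hW ha h1) hI₁₂
      · rw [SimpleGraph.adj_comm, ap_adj_inl_inrl] at hab
        rw [hab.1] at hb
        have h1 : Sum.inl u ∈ Wit I₁ := hcontainA I₁ hb1i hb2i ja ha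
        exact absurd (mem_unique hW h1 hb) hI₁₂
      · have h1 := hcontainA I₁ hb1i hb2i ja ha
        have h2 := hcontainA I₂ hb1j hb2j jb hb
        exact absurd (mem_unique hW h1 h2) hI₁₂
      · exact absurd hab (ap_adj_inrl_inrr _ _ _ _)
      · rw [SimpleGraph.adj_comm, ap_adj_inl_inrr] at hab
        rw [hab.1] at hb
        have h1 : Sum.inl v ∈ Wit I₁ := hcontainB I₁ hb1i hb2i ja ha
        exact absurd (mem_unique hW h1 hb) hI₁₂
      · rw [SimpleGraph.adj_comm] at hab
        exact absurd hab (ap_adj_inrl_inrr _ _ _ _)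
      · have h1 := hcontainB I₁ hb1i hb2i ja ha
        have h2 := hcontainB I₂ hb1j hb2j jb hb
        exact absurd (mem_unique hW h1 h2) hI₁₂
    · rintro ⟨x, hx, y, hy, hxy⟩
      have hadj' := (hW.adj I₁ I₂ hI₁₂).mpr
        ⟨Sum.inl x, hx, Sum.inl y, hy, (ap_adj_inl_inl G u v k).mpr hxy⟩
      rw [pathGraph_adj] at hadj' ⊢
      have h2 : g₁ + i.1 + 1 = g₁ + j.1 ∨ g₁ + j.1 + 1 = g₁ + i.1 := hadj'
      omega
  · -- cover
    intro x
    have hb1 := hg₁le x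
    have hb2 := hg₂ge x
    have hwlt := (widx hW (Sum.inl x)).isLt
    refine ⟨⟨(widx hW (Sum.inl x)).1 - g₁, by omega⟩, ?_⟩
    have he : widx hW (Sum.inl x) =
        (⟨g₁ + ((⟨(widx hW (Sum.inl x)).1 - g₁, by omega⟩ : Fin (g₂ - g₁ + 1))).1,
          by omega⟩ : Fin m) :=
      Fin.ext (show (widx hW (Sum.inl x)).1 = g₁ + ((widx hW (Sum.inl x)).1 - g₁) by omega)
    exact he ▸ widx_mem hW (Sum.inl x)
  · -- disjoint
    intro i j hne
    rw [Set.disjoint_left]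
    intro x hxi hxj
    have hu2 := mem_unique hW hxi hxj
    have h2 : g₁ + i.1 = g₁ + j.1 := congrArg Fin.val hu2
    exact hne (Fin.ext (by omega))
  · -- cardinality
    have hrepP : ∀ i : Fin m, ∃ w : Fin (k + 1) ⊕ Fin (k + 1),
        (i.1 < g₁ ∨ g₂ < i.1) → Sum.inr w ∈ Wit i := by
      intro i
      by_cases hi : i.1 < g₁ ∨ g₂ < i.1
      · obtain ⟨z, hz⟩ := witness_nonempty hW i
        rcases z with x | w
        · exact absurd hz (hpure i hi x)
        · exact ⟨w, fun _ => hz⟩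
      · exact ⟨Sum.inl 0, fun hc => absurd hc hi⟩
    choose pend hpend using hrepP
    set ψ : Fin m → (Fin (g₂ - g₁ + 1) ⊕ (Fin (k + 1) ⊕ Fin (k + 1))) := fun i =>
      if h : g₁ ≤ i.1 ∧ i.1 ≤ g₂ then Sum.inl ⟨i.1 - g₁, by omega⟩ else Sum.inr (pend i)
      with hψ
    have hψinj : Function.Injective ψ := by
      intro i i' heq
      rw [hψ] at heq
      simp only [] at heq
      by_cases h : g₁ ≤ i.1 ∧ i.1 ≤ g₂ <;> by_cases h' : g₁ ≤ i'.1 ∧ i'.1 ≤ g₂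
      · rw [dif_pos h, dif_pos h'] at heq
        have h2 := Sum.inl_injective heq
        have h3 : i.1 - g₁ = i'.1 - g₁ := by have := congrArg Fin.val h2; exact this
        exact Fin.ext (by omega)
      · rw [dif_pos h, dif_neg h'] at heq; exact absurd heq (by simp)
      · rw [dif_neg h, dif_pos h'] at heq; exact absurd heq (by simp)
      · rw [dif_neg h, dif_neg h'] at heq
        have h2 := Sum.inr_injective heq
        have ho : i.1 < g₁ ∨ g₂ < i.1 := by
          rw [not_and_or] at h
          rcases h with h | h
          · exact Or.inl (by omega)
          · exact Or.inr (by omega)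
        have ho' : i'.1 < g₁ ∨ g₂ < i'.1 := by
          rw [not_and_or] at h'
          rcases h' with h' | h'
          · exact Or.inl (by omega)
          · exact Or.inr (by omega)
        have m1 := hpend i ho
        have m2 := hpend i' ho'
        rw [h2] at m1
        exact mem_unique hW m1 m2
    have hcard2 := Nat.card_le_card_of_injective ψ hψinj
    rw [Nat.card_sum, Nat.card_sum] at hcard2
    have e1 : Nat.card (Fin m) = m := by simp [Nat.card_eq_fintype_card]
    have e2 : Nat.card (Fin (g₂ - g₁ + 1)) = g₂ - g₁ + 1 := by simp [Nat.card_eq_fintype_card]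
    have e4 : Nat.card (Fin (k + 1)) = k + 1 := by simp [Nat.card_eq_fintype_card]
    have e5 : Nat.card (V ⊕ (Fin (k + 1) ⊕ Fin (k + 1))) = Nat.card V + (2 * k + 2) := by
      rw [Nat.card_sum, Nat.card_sum]
      simp only [Nat.card_eq_fintype_card, Fintype.card_fin]
      omega
    omega
  · -- endpoints
    have hmemF : ∀ (x : V) (i : Fin (g₂ - g₁ + 1)), (widx hW (Sum.inl x)).1 = g₁ + i.1 →
        x ∈ (fun i : Fin (g₂ - g₁ + 1) =>
          {x : V | Sum.inl x ∈ Wit ⟨g₁ + i.1, by have := i.isLt; omega⟩}) i := by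
      intro x i hx
      show Sum.inl x ∈ Wit ⟨g₁ + i.1, by have := i.isLt; omega⟩
      have he : widx hW (Sum.inl x) = (⟨g₁ + i.1, by have := i.isLt; omega⟩ : Fin m) :=
        Fin.ext hx
      exact he ▸ widx_mem hW (Sum.inl x)
    rcases Nat.eq_or_lt_of_le hg₁₂ with hgg | hglt
    · left
      have htu' : (widx hW (Sum.inl u)).1 = g₁ := by
        rcases htu with h | h
        · exact h
        · omega
      have htv' : (widx hW (Sum.inl v)).1 = g₁ := by
        rcases htv with h | h
        · exact h
        · omega
      constructor
      · exact hmemF u 0 (show (widx hW (Sum.inl u)).1 = g₁ + 0 by omega)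
      · exact hmemF v (Fin.last (g₂ - g₁))
          (show (widx hW (Sum.inl v)).1 = g₁ + (g₂ - g₁) by omega)
    · have hneuv := hdistinct hglt
      rcases htu with hu1 | hu2
      · left
        have hv2 : (widx hW (Sum.inl v)).1 = g₂ := by
          rcases htv with h | h
          · omega
          · exact h
        constructor
        · exact hmemF u 0 (show (widx hW (Sum.inl u)).1 = g₁ + 0 by omega)
        · exact hmemF v (Fin.last (g₂ - g₁))
            (show (widx hW (Sum.inl v)).1 = g₁ + (g₂ - g₁) by omega)
      · right
        have hv1 : (widx hW (Sum.inl v)).1 = g₁ := by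
          rcases htv with h | h
          · exact h
          · omega
        constructor
        · exact hmemF u (Fin.last (g₂ - g₁))
            (show (widx hW (Sum.inl u)).1 = g₁ + (g₂ - g₁) by omega)
        · exact hmemF v 0 (show (widx hW (Sum.inl v)).1 = g₁ + 0 by omega)

end Stmt15Aux
namespace Stmt15Aux

open SimpleGraph

lemma backward_main {V : Type} [Finite V] {G : SimpleGraph V} (hconn : G.Connected) {u v : V}
    {k : ℕ}
    (h : ∃ (W : Type) (P : SimpleGraph W), IsPathGraph P ∧
      KContractible (attachPaths G u v k) P k) :
    PathContractFixed G u v k := by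
  classical
  obtain ⟨W, P, ⟨m, ⟨e⟩⟩, nc, hnck, hcon⟩ := h
  haveI hfinVH : Finite (V ⊕ (Fin (k + 1) ⊕ Fin (k + 1))) := inferInstance
  haveI hfinW : Finite W := contractsIn_finite hcon hfinVH
  have hcardVH := contractsIn_card hcon hfinVH
  obtain ⟨Wit0, hW0⟩ := witness_of_contractsIn hcon
  have hW := iso_witness hW0 e
  have hcW : Nat.card W = m := by
    have h2 := Nat.card_eq_of_bijective _ e.toEquiv.bijective
    simpa [Nat.card_eq_fintype_card] using h2
  exact backward_core hconn hnck hW (by rw [hcardVH, hcW])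

end Stmt15Aux

/-- `G` can be contracted to a path with `u` and `v` in the two endpoint
witness sets using at most `k` contractions, iff the graph `H` obtained by attaching
pendant paths of length `k + 1` at `u` and at `v` is `k`-contractible to a path. -/
theorem stmt15 {V : Type} [Finite V] (G : SimpleGraph V) (hconn : G.Connected)
    (u v : V) (k : ℕ) :
    PathContractFixed G u v k ↔
      ∃ (W : Type) (P : SimpleGraph W), IsPathGraph P ∧
        KContractible (attachPaths G u v k) P k :=
  ⟨Stmt15Aux.forward_main, Stmt15Aux.backward_main hconn⟩
end

section
/- If H is a connected graph containing two pendant paths P_1 (from u' to u) and P_2 (from v' to v) each of length k + 1, where u' and v' have degree 1 in H and all internal vertices of P_1, P_2 have degree 2 in H, and H is k-contractible to a path P, then the witness sets containing u' and v' correspond to the two endvertices of P. -/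
open SimpleGraph

lemma ContractsIn.card_eq {V : Type} {G : SimpleGraph V} {W : Type} {H : SimpleGraph W}
    {n : ℕ} (h : ContractsIn G H n) :
    Finite V → Nat.card V = Nat.card W + n := by
  induction h with
  | iso h => intro _; obtain ⟨e⟩ := h; simp [Nat.card_congr e.toEquiv]
  | step u v huv h ih =>
    intro hfin
    have hfin' : Finite {x : _ // x ≠ v} := Subtype.finite
    have h1 := ih hfin'
    haveI : Unique {x : _ // x = v} := ⟨⟨⟨v, rfl⟩⟩, fun a => Subtype.ext a.2⟩
    classical
    have h2 := Nat.card_congr (Equiv.sumCompl (· = v)).symm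
    rw [Nat.card_sum, Nat.card_unique (α := {x // x = v})] at h2
    have h3 : Nat.card {x : _ // x ≠ v} = Nat.card {a : _ // ¬ a = v} := rfl
    omega

lemma pair_case {α : Type} {a b u1 u2 x : α} (h12 : u1 ≠ u2)
    (h1 : u1 = a ∨ u1 = b) (h2 : u2 = a ∨ u2 = b) (hx : x = a ∨ x = b) :
    x = u1 ∨ x = u2 := by
  rcases h1 with rfl | rfl <;> rcases h2 with rfl | rfl <;> tauto

lemma keyA {VH : Type} [Finite VH] (H : SimpleGraph VH) {k n : ℕ}
    (Wit : Fin (n + 1) → Set VH)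
    (hW : IsWitnessStructure H (SimpleGraph.pathGraph (n + 1)) Wit)
    (hcard : Nat.card VH ≤ n + 1 + k)
    (w : VH → Fin (n + 1)) (hwmem : ∀ x, x ∈ Wit (w x))
    (hwuniq : ∀ x h, x ∈ Wit h → h = w x)
    (p : Fin (k + 2) → VH) (hp : Function.Injective p)
    (hpadj : ∀ i : Fin (k + 1), H.Adj (p i.castSucc) (p i.succ))
    (hd1 : Nat.card (H.neighborSet (p 0)) = 1)
    (hd2 : ∀ i : Fin (k + 2), i ≠ 0 → i ≠ Fin.last (k + 1) →
      Nat.card (H.neighborSet (p i)) = 2) :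
    (w (p 0) = 0 ∨ w (p 0) = Fin.last n) ∧ Wit (w (p 0)) ⊆ Set.range p := by
  classical
  set s : Fin (n + 1) := w (p 0) with hs
  -- ℕ-indexed version of the path
  set P : ℕ → VH := fun j => p ⟨min j (k + 1), by omega⟩ with hPdef
  have hPeq : ∀ j (hj : j ≤ k + 1), P j = p ⟨j, by omega⟩ := by
    intro j hj
    simp only [hPdef]
    congr 1
    exact Fin.ext (by simp [Nat.min_eq_left hj])
  have hP0 : P 0 = p 0 := by rw [hPeq 0 (by omega)]; rfl
  have hPadj : ∀ j, j ≤ k → H.Adj (P j) (P (j + 1)) := by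
    intro j hj
    have := hpadj ⟨j, by omega⟩
    rw [hPeq j (by omega), hPeq (j+1) (by omega)]
    simpa [Fin.castSucc, Fin.succ, Fin.castAdd, Fin.castLE] using this
  have hPinj : ∀ j j', j ≤ k + 1 → j' ≤ k + 1 → P j = P j' → j = j' := by
    intro j j' hj hj' he
    rw [hPeq j hj, hPeq j' hj'] at he
    have := hp he
    simpa [Fin.ext_iff] using this
  -- neighbours along the pendant path
  have hnbr : ∀ j, j ≤ k → ∀ x, H.Adj (P j) x → x = P (j - 1) ∨ x = P (j + 1) := by
    intro j hj x hx
    rcases Nat.eq_zero_or_pos j with rfl | hjpos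
    · -- degree 1 vertex
      rw [Nat.card_coe_set_eq, Set.ncard_eq_one] at hd1
      obtain ⟨a, ha⟩ := hd1
      have h1 : P 1 ∈ H.neighborSet (p 0) := by
        rw [← hP0]; exact hPadj 0 (by omega)
      have hx' : x ∈ H.neighborSet (p 0) := by rw [← hP0]; exact hx
      rw [ha] at h1 hx'
      right
      rw [Set.mem_singleton_iff] at h1 hx'
      rw [hx', ← h1]
    · -- internal vertex of degree 2
      have hij : (⟨j, by omega⟩ : Fin (k + 2)) ≠ 0 := by
        simp [Fin.ext_iff]; omega
      have hij' : (⟨j, by omega⟩ : Fin (k + 2)) ≠ Fin.last (k + 1) := by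
        simp [Fin.ext_iff, Fin.last]; omega
      have hd := hd2 ⟨j, by omega⟩ hij hij'
      rw [Nat.card_coe_set_eq, Set.ncard_eq_two] at hd
      obtain ⟨a, b, hab, hset⟩ := hd
      have hPj : P j = p ⟨j, by omega⟩ := hPeq j (by omega)
      have h1 : P (j - 1) ∈ H.neighborSet (P j) := by
        have := hPadj (j - 1) (by omega)
        have hj1 : j - 1 + 1 = j := by omega
        rw [hj1] at this
        exact this.symm
      have h2 : P (j + 1) ∈ H.neighborSet (P j) := hPadj j hj
      have hx' : x ∈ H.neighborSet (P j) := hx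
      rw [hPj, hset] at h1 h2 hx'
      have hne : P (j - 1) ≠ P (j + 1) := by
        intro he
        have := hPinj _ _ (by omega) (by omega) he
        omega
      exact pair_case hne h1 h2 hx'
  -- the witness index is not constant along the path
  have hnotconst : ¬ ∀ j, j ≤ k + 1 → w (P j) = s := by
    intro hall
    have hWitne : ∀ i : Fin (n + 1), (Wit i).Nonempty := by
      intro i
      have := (hW.connected i).nonempty
      exact Set.nonempty_coe_sort.mp this
    set rep : Fin (n + 1) → VH := fun i => if i = s then p 0 else (hWitne i).some
      with hrep
    have hrepmem : ∀ i, rep i ∈ Wit i := by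
      intro i
      by_cases hi : i = s
      · simp only [hrep, if_pos hi, hi]; exact hwmem (p 0)
      · simp only [hrep, if_neg hi]; exact (hWitne i).some_mem
    set f : Fin (n + 1) ⊕ Fin (k + 1) → VH :=
      Sum.elim rep (fun j => P (j.1 + 1)) with hf
    have hPmem : ∀ j : Fin (k + 1), P (j.1 + 1) ∈ Wit s := by
      intro j
      have := hall (j.1 + 1) (by omega)
      rw [← this]; exact hwmem _
    have hfinj : Function.Injective f := by
      intro x y hxy
      clear_value f rep
      match x, y with
      | Sum.inl i, Sum.inl i' =>
        simp only [hf, Sum.elim_inl] at hxy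
        have h1 : i = w (rep i) := hwuniq _ _ (hrepmem i)
        have h2 : i' = w (rep i') := hwuniq _ _ (hrepmem i')
        rw [h1, h2, hxy]
      | Sum.inl i, Sum.inr j =>
        exfalso
        simp only [hf, Sum.elim_inl, Sum.elim_inr] at hxy
        have h1 : i = w (rep i) := hwuniq _ _ (hrepmem i)
        have h2 : s = w (P (j.1 + 1)) := hwuniq _ _ (hPmem j)
        have his : i = s := by rw [h1, h2, hxy]
        have : rep i = p 0 := by simp [hrep, if_pos his]
        rw [this, ← hP0] at hxy
        have := hPinj _ _ (by omega) (by omega) hxy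
        omega
      | Sum.inr j, Sum.inl i =>
        exfalso
        simp only [hf, Sum.elim_inl, Sum.elim_inr] at hxy
        have h1 : i = w (rep i) := hwuniq _ _ (hrepmem i)
        have h2 : s = w (P (j.1 + 1)) := hwuniq _ _ (hPmem j)
        have his : i = s := by rw [h1, h2, ← hxy]
        have : rep i = p 0 := by simp [hrep, if_pos his]
        rw [this, ← hP0] at hxy
        have := hPinj _ _ (by omega) (by omega) hxy
        omega
      | Sum.inr j, Sum.inr j' =>
        simp only [hf, Sum.elim_inr] at hxy
        have := hPinj _ _ (by omega) (by omega) hxy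
        exact congrArg Sum.inr (Fin.ext (by omega))
    have hle := Nat.card_le_card_of_injective f hfinj
    rw [Nat.card_sum, Nat.card_eq_fintype_card, Nat.card_eq_fintype_card] at hle
    simp [Fintype.card_fin] at hle
    omega
  -- least index where the witness set changes
  have hex : ∃ a, a ≤ k ∧ w (P (a + 1)) ≠ s := by
    by_contra hno
    push_neg at hno
    apply hnotconst
    intro j hj
    induction j with
    | zero => rw [hP0]
    | succ m ih =>
      exact hno m (by omega)
  obtain ⟨a, hak, hat, hmin⟩ :
      ∃ a, a ≤ k ∧ w (P (a + 1)) ≠ s ∧ ∀ b, b < a → w (P (b + 1)) = s := by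
    have hex' : ∃ a, w (P (a + 1)) ≠ s := ⟨hex.choose, hex.choose_spec.2⟩
    refine ⟨Nat.find hex', ?_, Nat.find_spec hex', ?_⟩
    · have := Nat.find_min' hex' hex.choose_spec.2
      have := hex.choose_spec.1
      omega
    · intro b hb
      have := Nat.find_min hex' hb
      push_neg at this
      exact this
  have hseg_w : ∀ j, j ≤ a → w (P j) = s := by
    intro j hj
    induction j with
    | zero => rw [hP0]
    | succ m ih => exact hmin m (by omega)
  -- the witness set of s is contained in the initial segment of the path
  have hsub : ∀ y ∈ Wit s, ∃ j, j ≤ a ∧ y = P j := by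
    have key : ∀ (x y : ↥(Wit s)) (wk : (H.induce (Wit s)).Walk x y),
        (∃ j, j ≤ a ∧ x.1 = P j) → ∃ j, j ≤ a ∧ y.1 = P j := by
      intro x y wk
      induction wk with
      | nil => exact id
      | cons hadj tail ih =>
        rename_i x₁ m₀ z₀
        intro ⟨j, hj, hx⟩
        have hHadj : H.Adj x₁.1 m₀.1 := hadj
        rw [hx] at hHadj
        rcases hnbr j (by omega) m₀.1 hHadj with hm | hm
        · exact ih ⟨j - 1, by omega, hm⟩
        · by_cases hja : j = a
          · exfalso
            apply hat
            have : (m₀ : VH) ∈ Wit s := m₀.2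
            rw [hm, hja] at this
            exact (hwuniq _ _ this).symm
          · exact ih ⟨j + 1, by omega, hm⟩
    intro y hy
    have hmem0 : p 0 ∈ Wit s := hwmem (p 0)
    have hreach := ((hW.connected s).preconnected ⟨p 0, hmem0⟩ ⟨y, hy⟩)
    obtain ⟨wk⟩ := hreach
    exact key _ _ wk ⟨0, by omega, hP0.symm⟩
  -- every path-graph neighbour of s equals w (P (a+1))
  have hend : ∀ h : Fin (n + 1), (SimpleGraph.pathGraph (n + 1)).Adj s h →
      h = w (P (a + 1)) := by
    intro h hadj
    have hne : s ≠ h := hadj.ne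
    obtain ⟨x, hxs, y, hyh, hxy⟩ := (hW.adj s h hne).mp hadj
    obtain ⟨j, hj, rfl⟩ := hsub x hxs
    rcases hnbr j (by omega) y hxy with hm | hm
    · exfalso
      have : h = w (P (j - 1)) := by rw [← hm]; exact hwuniq _ _ hyh
      rw [hseg_w (j - 1) (by omega)] at this
      exact hne this.symm
    · by_cases hja : j = a
      · subst hja
        rw [← hm]
        exact hwuniq _ _ hyh
      · exfalso
        have : h = w (P (j + 1)) := by rw [← hm]; exact hwuniq _ _ hyh
        rw [hseg_w (j + 1) (by omega)] at this
        exact hne this.symm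
  constructor
  · by_contra hcon
    push_neg at hcon
    obtain ⟨hs0, hsl⟩ := hcon
    have h0 : 0 < s.1 := by
      rcases Nat.eq_zero_or_pos s.1 with h | h
      · exact absurd (Fin.ext h) hs0
      · exact h
    have hl : s.1 < n := by
      have := s.2
      rcases Nat.lt_or_ge s.1 n with h | h
      · exact h
      · exact absurd (Fin.ext (by simp [Fin.last]; omega)) hsl
    have hadj1 : (SimpleGraph.pathGraph (n + 1)).Adj s ⟨s.1 - 1, by omega⟩ := by
      rw [SimpleGraph.pathGraph_adj]
      right; simp; omega
    have hadj2 : (SimpleGraph.pathGraph (n + 1)).Adj s ⟨s.1 + 1, by omega⟩ := by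
      rw [SimpleGraph.pathGraph_adj]
      left; simp
    have h1 := hend _ hadj1
    have h2 := hend _ hadj2
    rw [← h2, Fin.ext_iff] at h1
    simp only [] at h1
    omega
  · intro y hy
    obtain ⟨j, hj, rfl⟩ := hsub y hy
    exact ⟨_, (hPeq j (by omega)).symm⟩

/-- If a connected graph `H` contains two (disjoint) pendant paths
`p : u' — … — u` and `q : v' — … — v`, each of length `k + 1`, with `u'`, `v'` of
degree 1 and all internal vertices of degree 2, and `H` is `k`-contractible to a path,
then the witness sets containing `u'` and `v'` correspond to the two endvertices of
the path. -/
theorem stmt16 {VH : Type} [Finite VH] (H : SimpleGraph VH) (hconn : H.Connected)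
    (k : ℕ) (u u' v v' : VH) (p q : Fin (k + 2) → VH)
    (hp : Function.Injective p) (hq : Function.Injective q)
    (hpq : ∀ i j, p i ≠ q j)
    (hp0 : p 0 = u') (hpl : p (Fin.last (k + 1)) = u)
    (hq0 : q 0 = v') (hql : q (Fin.last (k + 1)) = v)
    (hpadj : ∀ i : Fin (k + 1), H.Adj (p i.castSucc) (p i.succ))
    (hqadj : ∀ i : Fin (k + 1), H.Adj (q i.castSucc) (q i.succ))
    (hu' : Nat.card (H.neighborSet u') = 1)
    (hv' : Nat.card (H.neighborSet v') = 1)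
    (hpint : ∀ i : Fin (k + 2), i ≠ 0 → i ≠ Fin.last (k + 1) →
      Nat.card (H.neighborSet (p i)) = 2)
    (hqint : ∀ i : Fin (k + 2), i ≠ 0 → i ≠ Fin.last (k + 1) →
      Nat.card (H.neighborSet (q i)) = 2)
    (n : ℕ) (hk : KContractible H (SimpleGraph.pathGraph (n + 1)) k)
    (Wit : Fin (n + 1) → Set VH)
    (hW : IsWitnessStructure H (SimpleGraph.pathGraph (n + 1)) Wit) :
    (u' ∈ Wit 0 ∧ v' ∈ Wit (Fin.last n)) ∨
      (u' ∈ Wit (Fin.last n) ∧ v' ∈ Wit 0) := by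
  classical
  subst hp0
  subst hq0
  obtain ⟨m, hm, hcon⟩ := hk
  have hcard : Nat.card VH ≤ n + 1 + k := by
    have h := hcon.card_eq inferInstance
    have h2 : Nat.card (Fin (n + 1)) = n + 1 := by
      simp [Nat.card_eq_fintype_card]
    omega
  set w : VH → Fin (n + 1) := fun x => (hW.cover x).choose with hw
  have hwmem : ∀ x, x ∈ Wit (w x) := fun x => (hW.cover x).choose_spec
  have hwuniq : ∀ x h, x ∈ Wit h → h = w x := by
    intro x h hx
    by_contra hne
    exact Set.disjoint_left.mp (hW.disjoint h (w x) hne) hx (hwmem x)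
  obtain ⟨hsp, hsubp⟩ := keyA H Wit hW hcard w hwmem hwuniq p hp hpadj hu' hpint
  obtain ⟨hsq, hsubq⟩ := keyA H Wit hW hcard w hwmem hwuniq q hq hqadj hv' hqint
  have hne : w (p 0) ≠ w (q 0) := by
    intro he
    have hq0 : q 0 ∈ Wit (w (p 0)) := by rw [he]; exact hwmem (q 0)
    obtain ⟨i, hi⟩ := hsubp hq0
    exact hpq i 0 hi
  rcases hsp with h | h <;> rcases hsq with h' | h'
  · exact absurd (h.trans h'.symm) hne
  · left
    constructor
    · have := hwmem (p 0); rwa [h] at this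
    · have := hwmem (q 0); rwa [h'] at this
  · right
    constructor
    · have := hwmem (p 0); rwa [h] at this
    · have := hwmem (q 0); rwa [h'] at this
  · exact absurd (h.trans h'.symm) hne
end

section
/- If a connected graph G has a block B (maximal 2-connected subgraph) with |V(B)| ≥ k + 2 and |V(G) \ V(B)| ≥ k + 1, then G is not k-contractible to a cycle. -/
open SimpleGraph

/-- A block of `G`: a maximal 2-connected (induced) subgraph, given by its vertex set. -/
def IsBlock {V : Type} (G : SimpleGraph V) (B : Set V) : Prop :=
  TwoConnected (G.induce B) ∧
  ∀ B' : Set V, B ⊆ B' → TwoConnected (G.induce B') → B' = B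


section AuxAll
open Set

section Infra

variable {α β : Type}

/-- Build an iso between induced subgraphs from an equiv respecting adjacency. -/
def isoInduce {A : SimpleGraph α} {B : SimpleGraph β} {S : Set α} {T : Set β}
    (e : S ≃ T) (h : ∀ a b : S, A.Adj a.1 b.1 ↔ B.Adj (e a).1 (e b).1) :
    A.induce S ≃g B.induce T where
  toEquiv := e
  map_rel_iff' := fun {a b} => (h a b).symm

lemma TwoConnected.of_iso {A : SimpleGraph α} {B : SimpleGraph β} (φ : A ≃g B)
    (h : TwoConnected A) : TwoConnected B := by
  obtain ⟨h1, h2, h3⟩ := h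
  refine ⟨(φ.connected_iff).mp h1, ?_, ?_⟩
  · rwa [Nat.card_congr φ.toEquiv] at h2
  · intro v
    have iso : A.induce {u | u ≠ φ.symm v} ≃g B.induce {u | u ≠ v} :=
      isoInduce (Equiv.subtypeEquiv φ.toEquiv (by
        intro a
        simp only [Set.mem_setOf_eq]
        constructor
        · intro ha hc
          exact ha (by rw [← hc]; exact (φ.symm_apply_apply a).symm)
        · intro ha hc
          apply ha; rw [hc]; exact (φ.apply_symm_apply v)))
        (fun a b => φ.map_adj_iff.symm)
    exact iso.connected_iff.mp (h3 (φ.symm v))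

end Infra

section Conn2

variable {V : Type} {G : SimpleGraph V}

/-- 2-connectivity of an induced subgraph, phrased on sets. -/
def Conn2 (G : SimpleGraph V) (T : Set V) : Prop :=
  (G.induce T).Connected ∧ 3 ≤ T.ncard ∧ ∀ c ∈ T, (G.induce (T \ {c})).Connected

/-- Induce of induce is induce of the image. -/
def isoInduceInduce (G : SimpleGraph V) (T : Set V) (c : V) :
    (G.induce T).induce {u : T | u.1 ≠ c} ≃g G.induce (T \ {c}) :=
  isoInduce
    { toFun := fun a => ⟨a.1.1, a.1.2, a.2⟩
      invFun := fun b => ⟨⟨b.1, b.2.1⟩, b.2.2⟩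
      left_inv := fun a => rfl
      right_inv := fun b => rfl }
    (fun a b => Iff.rfl)

lemma conn2_iff (G : SimpleGraph V) (T : Set V) :
    TwoConnected (G.induce T) ↔ Conn2 G T := by
  constructor
  · rintro ⟨h1, h2, h3⟩
    refine ⟨h1, by rwa [Nat.card_coe_set_eq] at h2, fun c hc => ?_⟩
    have h4 := h3 ⟨c, hc⟩
    have hset : {u : T | u ≠ (⟨c, hc⟩ : T)} = {u : T | u.1 ≠ c} := by
      ext u; simp [Subtype.ext_iff]
    rw [hset] at h4
    exact (isoInduceInduce G T c).connected_iff.mp h4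
  · rintro ⟨h1, h2, h3⟩
    refine ⟨h1, by rwa [Nat.card_coe_set_eq], fun c => ?_⟩
    have h4 := (isoInduceInduce G T c.1).connected_iff.mpr (h3 c.1 c.2)
    have hset : {u : T | u ≠ c} = {u : T | u.1 ≠ c.1} := by
      ext u; simp [Subtype.ext_iff]
    rwa [hset]

/-- Monotone hom between induced subgraphs. -/
def homInduceMono (G : SimpleGraph V) {S T : Set V} (h : S ⊆ T) :
    G.induce S →g G.induce T where
  toFun := fun a => ⟨a.1, h a.2⟩
  map_rel' := fun hab => hab

lemma connected_induce_union {S T : Set V} (hS : (G.induce S).Connected)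
    (hT : (G.induce T).Connected) (hST : (S ∩ T).Nonempty) :
    (G.induce (S ∪ T)).Connected := by
  obtain ⟨p, hpS, hpT⟩ := hST
  have hp : p ∈ S ∪ T := Or.inl hpS
  rw [connected_iff_exists_forall_reachable]
  refine ⟨⟨p, hp⟩, ?_⟩
  rintro ⟨w, hw | hw⟩
  · exact Reachable.map (homInduceMono G (Set.subset_union_left : S ⊆ S ∪ T))
      (hS ⟨p, hpS⟩ ⟨w, hw⟩)
  · exact Reachable.map (homInduceMono G (Set.subset_union_right : T ⊆ S ∪ T))
      (hT ⟨p, hpT⟩ ⟨w, hw⟩)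

lemma connected_induce_insert {S : Set V} {a b : V} (hS : (G.induce S).Connected)
    (hb : b ∈ S) (hab : G.Adj a b) :
    (G.induce (insert a S)).Connected := by
  rw [connected_iff_exists_forall_reachable]
  refine ⟨⟨b, Or.inr hb⟩, ?_⟩
  rintro ⟨w, hw | hw⟩
  · subst hw
    exact (Adj.reachable (by exact hab.symm : (G.induce (insert w S)).Adj ⟨b, Or.inr hb⟩ ⟨w, Or.inl rfl⟩)).symm.symm
  · exact (hS ⟨b, hb⟩ ⟨w, hw⟩).map (homInduceMono G (Set.subset_insert a S))

lemma conn2_union [Finite V] {S T : Set V} (hS : Conn2 G S) (hT : Conn2 G T)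
    (hST : 2 ≤ (S ∩ T).ncard) : Conn2 G (S ∪ T) := by
  obtain ⟨hS1, hS2, hS3⟩ := hS
  obtain ⟨hT1, hT2, hT3⟩ := hT
  have hne : (S ∩ T).Nonempty := by
    rcases Set.eq_empty_or_nonempty (S ∩ T) with h | h
    · simp [h] at hST
    · exact h
  refine ⟨connected_induce_union hS1 hT1 hne, ?_, ?_⟩
  · exact le_trans hS2 (Set.ncard_le_ncard Set.subset_union_left (Set.toFinite _))
  · intro c hc
    have hrw : (S ∪ T) \ {c} = (S \ {c}) ∪ (T \ {c}) := Set.union_diff_distrib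
    rw [hrw]
    have hSc : (G.induce (S \ {c})).Connected := by
      by_cases h : c ∈ S
      · exact hS3 c h
      · rwa [Set.diff_singleton_eq_self h]
    have hTc : (G.induce (T \ {c})).Connected := by
      by_cases h : c ∈ T
      · exact hT3 c h
      · rwa [Set.diff_singleton_eq_self h]
    apply connected_induce_union hSc hTc
    obtain ⟨b, hbmem, hbne⟩ := Set.exists_ne_of_one_lt_ncard (show 1 < (S ∩ T).ncard by omega) c
    exact ⟨b, ⟨⟨hbmem.1, hbne⟩, ⟨hbmem.2, hbne⟩⟩⟩

/-- Transfer `Conn2` along a graph isomorphism. -/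
lemma conn2_of_iso {W : Type} {H : SimpleGraph W} (φ : G ≃g H) {S : Set V}
    (h : Conn2 G S) : Conn2 H (φ '' S) := by
  rw [← conn2_iff] at h ⊢
  refine TwoConnected.of_iso (isoInduce (Equiv.Set.image φ.toEquiv S φ.toEquiv.injective)
    (fun a b => ?_)) h
  exact φ.map_adj_iff.symm

end Conn2


variable {V : Type} (G : SimpleGraph V)

/-- If the special clauses of the contraction never fire inside `D`, the induced
contracted graph is isomorphic to the induced graph on the image of `D`. -/
noncomputable def isoDead {u v : V} (D : Set {x : V // x ≠ v})
    (hdead : ∀ a ∈ D, ∀ b ∈ D, Subtype.val a = u → G.Adj v b.1 → a = b) :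
    (G.contractEdge u v).induce D ≃g G.induce (Subtype.val '' D) :=
  isoInduce (Equiv.Set.image Subtype.val D Subtype.val_injective) (by
    intro a b
    show (G.contractEdge u v).Adj a.1 b.1 ↔ G.Adj a.1.1 b.1.1
    rw [contractEdge, fromRel_adj]
    constructor
    · rintro ⟨hne, (h | ⟨h1, h2⟩ | ⟨h1, h2⟩) | (h | ⟨h1, h2⟩ | ⟨h1, h2⟩)⟩
      · exact h
      · exact absurd (hdead a.1 a.2 b.1 b.2 h1 h2) hne
      · exact absurd (hdead b.1 b.2 a.1 a.2 h1 h2).symm hne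
      · exact h.symm
      · exact absurd (hdead b.1 b.2 a.1 a.2 h1 h2).symm hne
      · exact absurd (hdead a.1 a.2 b.1 b.2 h1 h2) hne
    · intro h
      exact ⟨fun hc => h.ne (congrArg Subtype.val hc), Or.inl (Or.inl h)⟩)

/-- Lifting connectivity through an edge contraction. -/
lemma lift_connected {u v : V} (huv : G.Adj u v)
    (D : Set {x : V // x ≠ v}) (hu : (⟨u, huv.ne⟩ : {x : V // x ≠ v}) ∈ D)
    (hc : ((G.contractEdge u v).induce D).Connected) :
    (G.induce (Subtype.val '' D ∪ {v})).Connected := by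
  set T : Set V := Subtype.val '' D ∪ {v} with hT
  have hvT : v ∈ T := Or.inr rfl
  let f : D → T := fun a => ⟨a.1.1, Or.inl ⟨a.1, a.2, rfl⟩⟩
  have key : ∀ (a b : D), ((G.contractEdge u v).induce D).Walk a b →
      (G.induce T).Reachable (f a) (f b) := by
    intro a b w
    induction w with
    | nil => exact Reachable.refl _
    | @cons x y _ h p ih =>
      refine Reachable.trans ?_ ih
      have h' : (G.contractEdge u v).Adj x.1 y.1 := h
      rw [contractEdge, fromRel_adj] at h'
      obtain ⟨hne, hr⟩ := h'
      have two : ∀ (p q : T), (G.induce T).Adj p ⟨v, hvT⟩ → (G.induce T).Adj ⟨v, hvT⟩ q →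
          (G.induce T).Reachable p q := fun p q h1 h2 => (Adj.reachable h1).trans (Adj.reachable h2)
      have fu : ∀ (p : D), p.1.1 = u → (G.induce T).Adj (f p) ⟨v, hvT⟩ := by
        intro p hp
        show G.Adj p.1.1 v
        rw [hp]; exact huv
      have fv : ∀ (q : D), G.Adj v q.1.1 → (G.induce T).Adj ⟨v, hvT⟩ (f q) := fun q hq => hq
      rcases hr with (h | ⟨h1, h2⟩ | ⟨h1, h2⟩) | (h | ⟨h1, h2⟩ | ⟨h1, h2⟩)
      · exact Adj.reachable (by exact h : (G.induce T).Adj (f x) (f y))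
      · exact two (f x) (f y) (fu x h1) (fv y h2)
      · exact two (f x) (f y) (fv x h2).symm (fu y h1).symm
      · exact Adj.reachable (by exact h.symm : (G.induce T).Adj (f x) (f y))
      · exact two (f x) (f y) (fv x h2).symm (fu y h1).symm
      · exact two (f x) (f y) (fu x h1) (fv y h2)
  rw [connected_iff_exists_forall_reachable]
  refine ⟨⟨v, hvT⟩, ?_⟩
  rintro ⟨w, hw | hw⟩
  · obtain ⟨a, ha, rfl⟩ := hw
    have h1 : (G.induce T).Reachable ⟨v, hvT⟩ (f ⟨⟨u, huv.ne⟩, hu⟩) :=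
      Adj.reachable (huv.symm : (G.induce T).Adj ⟨v, hvT⟩ (f ⟨⟨u, huv.ne⟩, hu⟩))
    have h2 := key ⟨⟨u, huv.ne⟩, hu⟩ ⟨a, ha⟩ (hc _ _).some
    exact h1.trans h2
  · simp only [Set.mem_singleton_iff] at hw
    subst hw
    exact Reachable.refl _


section Part3
open SimpleGraph Set
variable {V : Type} (G : SimpleGraph V)

lemma compl_image_val {v : V} (D : Set {x : V // x ≠ v}) :
    (Subtype.val '' D)ᶜ = Subtype.val '' (Dᶜ) ∪ {v} := by
  ext x
  simp only [Set.mem_compl_iff, Set.mem_image, Set.mem_union, Set.mem_singleton_iff]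
  constructor
  · intro hmem
    by_cases hx : x = v
    · exact Or.inr hx
    · exact Or.inl ⟨⟨x, hx⟩, fun hD => hmem ⟨⟨x, hx⟩, hD, rfl⟩, rfl⟩
  · rintro (⟨a, ha, rfl⟩ | rfl)
    · rintro ⟨b, hb, hba⟩
      exact ha (by rwa [show b = a from Subtype.ext hba] at hb)
    · rintro ⟨b, _, hb⟩
      exact b.2 hb

lemma v_not_mem_image_val {v : V} (D : Set {x : V // x ≠ v}) :
    v ∉ Subtype.val '' D := by
  rintro ⟨b, _, hb⟩
  exact b.2 hb

lemma ncard_compl_image_val [Finite V] {v : V} (D : Set {x : V // x ≠ v}) :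
    (Subtype.val '' D)ᶜ.ncard = Dᶜ.ncard + 1 := by
  rw [compl_image_val, Set.union_singleton,
    Set.ncard_insert_of_notMem (v_not_mem_image_val _) (Set.toFinite _),
    Set.ncard_image_of_injective _ Subtype.val_injective]

lemma step_conn2 [Finite V] {u v : V} (huv : G.Adj u v)
    (D : Set {x : V // x ≠ v}) (h : Conn2 (G.contractEdge u v) D) :
    ∃ E : Set V, Conn2 G E ∧ Eᶜ.ncard ≤ Dᶜ.ncard + 1 := by
  classical
  set u' : {x : V // x ≠ v} := ⟨u, huv.ne⟩ with hu'def
  have val_ne : ∀ b : {x : V // x ≠ v}, b.1 = u → b = u' := fun b hb => Subtype.ext hb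
  by_cases hmem : u' ∈ D
  · by_cases hA : ∃ b ∈ D, b ≠ u' ∧ G.Adj v b.1
    · obtain ⟨b₁, hb₁D, hb₁ne, hb₁adj⟩ := hA
      by_cases hB : ∃ b ∈ D, b ≠ u' ∧ G.Adj u b.1
      · -- Case C : both `u` and `v` have other neighbours in `D`; direct proof
        obtain ⟨b₂, hb₂D, hb₂ne, hb₂adj⟩ := hB
        have hdead' : ∀ a ∈ D \ {u'}, ∀ b ∈ D \ {u'}, Subtype.val a = u → G.Adj v b.1 → a = b := by
          intro a ha _ _ hau _
          exact absurd (val_ne a hau) ha.2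
        have hsub_conn : (G.induce (Subtype.val '' (D \ {u'}))).Connected :=
          (isoDead G (D \ {u'}) hdead').connected_iff.mp (h.2.2 u' hmem)
        refine ⟨Subtype.val '' D ∪ {v}, ⟨?_, ?_, ?_⟩, ?_⟩
        · exact lift_connected G huv D hmem h.1
        · rw [Set.union_singleton, Set.ncard_insert_of_notMem (v_not_mem_image_val _)
            (Set.toFinite _), Set.ncard_image_of_injective _ Subtype.val_injective]
          have := h.2.1; omega
        · intro c hc
          rcases hc with hc | hc
          · obtain ⟨a, haD, rfl⟩ := hc
            by_cases hau : a = u'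
            · -- delete `u`
              subst hau
              have hset : (Subtype.val '' D ∪ {v}) \ {(u' : V)} =
                  insert v (Subtype.val '' (D \ {u'})) := by
                ext x
                simp only [Set.mem_diff, Set.mem_union, Set.mem_image, Set.mem_singleton_iff,
                  Set.mem_insert_iff]
                constructor
                · rintro ⟨⟨b, hb, rfl⟩ | rfl, hne⟩
                  · exact Or.inr ⟨b, ⟨hb, fun hb' => hne (by rw [hb'])⟩, rfl⟩
                  · exact Or.inl rfl
                · rintro (rfl | ⟨b, ⟨hb, hbne⟩, rfl⟩)
                  · exact ⟨Or.inr rfl, huv.ne.symm⟩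
                  · exact ⟨Or.inl ⟨b, hb, rfl⟩, fun hc => hbne (val_ne b hc)⟩
              rw [hset]
              exact connected_induce_insert hsub_conn ⟨b₁, ⟨hb₁D, hb₁ne⟩, rfl⟩ hb₁adj
            · -- delete an ordinary vertex
              have hset : Subtype.val '' (D \ {a}) ∪ {v} =
                  (Subtype.val '' D ∪ {v}) \ {(a : V)} := by
                ext x
                simp only [Set.mem_diff, Set.mem_union, Set.mem_image, Set.mem_singleton_iff]
                constructor
                · rintro (⟨b, ⟨hb, hbne⟩, rfl⟩ | rfl)
                  · exact ⟨Or.inl ⟨b, hb, rfl⟩,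
                      fun hc => hbne (Subtype.ext hc)⟩
                  · exact ⟨Or.inr rfl, fun hc => a.2 hc.symm⟩
                · rintro ⟨⟨b, hb, rfl⟩ | rfl, hne⟩
                  · exact Or.inl ⟨b, ⟨hb, fun hc => hne (by rw [hc])⟩, rfl⟩
                  · exact Or.inr rfl
            
              rw [← hset]
              exact lift_connected G huv (D \ {a})
                ⟨hmem, fun hc => hau (by rw [← hc])⟩ (h.2.2 a haD)
          · -- delete `v`
            rw [Set.mem_singleton_iff] at hc
            subst hc
            have hset : (Subtype.val '' D ∪ {c}) \ {c} = insert u (Subtype.val '' (D \ {u'})) := by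
              rw [Set.union_singleton, Set.insert_diff_self_of_notMem (v_not_mem_image_val D)]
              ext x
              simp only [Set.mem_image, Set.mem_insert_iff]
              constructor
              · rintro ⟨b, hb, rfl⟩
                by_cases hbu : b = u'
                · subst hbu; exact Or.inl rfl
                · exact Or.inr ⟨b, ⟨hb, hbu⟩, rfl⟩
              · rintro (rfl | ⟨b, ⟨hb, _⟩, rfl⟩)
                · exact ⟨u', hmem, rfl⟩
                · exact ⟨b, hb, rfl⟩
            rw [hset]
            exact connected_induce_insert hsub_conn ⟨b₂, ⟨hb₂D, hb₂ne⟩, rfl⟩ hb₂adj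
        · have hcompl : (Subtype.val '' D ∪ {v})ᶜ = Subtype.val '' (Dᶜ) := by
            rw [Set.compl_union, compl_image_val]
            ext x
            simp only [Set.mem_inter_iff, Set.mem_union, Set.mem_compl_iff,
              Set.mem_singleton_iff, Set.mem_image]
            constructor
            · rintro ⟨⟨b, hb, rfl⟩ | rfl, hne⟩
              · exact ⟨b, hb, rfl⟩
              · exact absurd rfl hne
            · rintro ⟨b, hb, rfl⟩
              exact ⟨Or.inl ⟨b, hb, rfl⟩, b.2⟩
          rw [hcompl, Set.ncard_image_of_injective _ Subtype.val_injective]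
          omega
      · -- Case B : `u` has no other neighbour; swap `u` for `v`
        push_neg at hB
        set E : Set V := Subtype.val '' (D \ {u'}) ∪ {v} with hE
        let f : D → E := fun a =>
          if ha : a.1 = u' then ⟨v, Or.inr rfl⟩
          else ⟨a.1.1, Or.inl ⟨a.1, ⟨a.2, ha⟩, rfl⟩⟩
        have hfpos : ∀ (a : D) (ha : a.1 = u'), (f a).1 = v := by
          intro a ha; simp only [f, dif_pos ha]
        have hfneg : ∀ (a : D) (ha : ¬ a.1 = u'), (f a).1 = a.1.1 := by
          intro a ha; simp only [f, dif_neg ha]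
        have hinj : Function.Injective f := by
          intro a b hfe
          have hfe' := congrArg Subtype.val hfe
          by_cases ha : a.1 = u' <;> by_cases hb : b.1 = u'
          · exact Subtype.ext (ha.trans hb.symm)
          · rw [hfpos a ha, hfneg b hb] at hfe'
            exact absurd hfe'.symm b.1.2
          · rw [hfneg a ha, hfpos b hb] at hfe'
            exact absurd hfe' a.1.2
          · rw [hfneg a ha, hfneg b hb] at hfe'
            exact Subtype.ext (Subtype.ext hfe')
        have hsurj : Function.Surjective f := by
          rintro ⟨xv, ⟨a, ⟨haD, hane⟩, rfl⟩ | hx⟩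
          · refine ⟨⟨a, haD⟩, Subtype.ext ?_⟩
            exact hfneg ⟨a, haD⟩ hane
          · rw [Set.mem_singleton_iff] at hx
            subst hx
            exact ⟨⟨u', hmem⟩, Subtype.ext (hfpos ⟨u', hmem⟩ rfl)⟩
        have hadj : ∀ a b : D, (G.contractEdge u v).Adj a.1 b.1 ↔
            G.Adj ((Equiv.ofBijective f ⟨hinj, hsurj⟩) a).1 ((Equiv.ofBijective f ⟨hinj, hsurj⟩) b).1 := by
          intro a b
          show (G.contractEdge u v).Adj a.1 b.1 ↔ G.Adj (f a).1 (f b).1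
          rw [contractEdge, fromRel_adj]
          by_cases ha : a.1 = u' <;> by_cases hb : b.1 = u'
          · rw [hfpos a ha, hfpos b hb]
            constructor
            · rintro ⟨hne, _⟩; exact absurd (ha.trans hb.symm) hne
            · intro hadj; exact absurd rfl hadj.ne
          · rw [hfpos a ha, hfneg b hb]
            have hau : a.1.1 = u := congrArg Subtype.val ha
            have hbu : ¬ G.Adj u b.1.1 := hB b.1 b.2 hb
            constructor
            · rintro ⟨hne, (h | ⟨h1, h2⟩ | ⟨h1, h2⟩) | (h | ⟨h1, h2⟩ | ⟨h1, h2⟩)⟩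
              · exact absurd (hau ▸ h) hbu
              · exact h2
              · exact absurd (val_ne b.1 h1) hb
              · exact absurd (hau ▸ h.symm) hbu
              · exact absurd (val_ne b.1 h1) hb
              · exact h2
            · intro hadj
              exact ⟨fun hc => hb (hc ▸ ha), Or.inl (Or.inr (Or.inl ⟨hau, hadj⟩))⟩
          · rw [hfneg a ha, hfpos b hb]
            have hbu : b.1.1 = u := congrArg Subtype.val hb
            have hau : ¬ G.Adj u a.1.1 := hB a.1 a.2 ha
            constructor
            · rintro ⟨hne, (h | ⟨h1, h2⟩ | ⟨h1, h2⟩) | (h | ⟨h1, h2⟩ | ⟨h1, h2⟩)⟩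
              · exact absurd (hbu ▸ h.symm) hau
              · exact absurd (val_ne a.1 h1) ha
              · exact h2.symm
              · exact absurd (hbu ▸ h) hau
              · exact h2.symm
              · exact absurd (val_ne a.1 h1) ha
            · intro hadj
              exact ⟨fun hc => ha (hc.symm ▸ hb), Or.inl (Or.inr (Or.inr ⟨hbu, hadj.symm⟩))⟩
          · rw [hfneg a ha, hfneg b hb]
            constructor
            · rintro ⟨hne, (h | ⟨h1, h2⟩ | ⟨h1, h2⟩) | (h | ⟨h1, h2⟩ | ⟨h1, h2⟩)⟩
              · exact h
              · exact absurd (val_ne a.1 h1) ha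
              · exact absurd (val_ne b.1 h1) hb
              · exact h.symm
              · exact absurd (val_ne b.1 h1) hb
              · exact absurd (val_ne a.1 h1) ha
            · intro hadj
              exact ⟨fun hc => hadj.ne (congrArg Subtype.val hc), Or.inl (Or.inl hadj)⟩
        have hiso : (G.contractEdge u v).induce D ≃g G.induce E :=
          isoInduce (Equiv.ofBijective f ⟨hinj, hsurj⟩) hadj
        refine ⟨E, ?_, ?_⟩
        · rw [← conn2_iff]
          exact TwoConnected.of_iso hiso ((conn2_iff _ _).mpr h)
        · have hcompl : Eᶜ = Subtype.val '' (Dᶜ) ∪ {u} := by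
            rw [hE, Set.compl_union, compl_image_val, Set.diff_eq, Set.compl_inter, compl_compl,
              Set.image_union, Set.image_singleton]
            ext x
            simp only [Set.mem_inter_iff, Set.mem_union, Set.mem_singleton_iff,
              Set.mem_compl_iff, Set.mem_image]
            constructor
            · rintro ⟨(h | h) | rfl, hne⟩
              · exact Or.inl h
              · exact Or.inr h
              · exact absurd rfl hne
            · rintro (⟨b, hb, rfl⟩ | rfl)
              · exact ⟨Or.inl (Or.inl ⟨b, hb, rfl⟩), b.2⟩
              · exact ⟨Or.inl (Or.inr rfl), huv.ne⟩
          have hunmem : u ∉ Subtype.val '' (Dᶜ) := by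
            rintro ⟨b, hb, hbu⟩
            exact hb (by rwa [val_ne b hbu])
          rw [hcompl, Set.union_singleton,
            Set.ncard_insert_of_notMem hunmem (Set.toFinite _),
            Set.ncard_image_of_injective _ Subtype.val_injective]
    · -- Case A : `v` has no other neighbour inside; contraction is inert
      push_neg at hA
      refine ⟨Subtype.val '' D, ?_, ?_⟩
      · rw [← conn2_iff]
        refine TwoConnected.of_iso (isoDead G D ?_) ((conn2_iff _ _).mpr h)
        intro a ha b hb hau hvb
        by_contra hne
        have hbu : b ≠ u' := by
          intro hc; subst hc
          exact hne ((val_ne a hau).trans rfl)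
        exact hA b hb hbu hvb
      · rw [ncard_compl_image_val]
  · -- `u` not involved at all
    refine ⟨Subtype.val '' D, ?_, ?_⟩
    · rw [← conn2_iff]
      refine TwoConnected.of_iso (isoDead G D ?_) ((conn2_iff _ _).mpr h)
      intro a ha _ _ hau _
      exact absurd (by rwa [val_ne a hau] at ha) hmem
    · rw [ncard_compl_image_val]

end Part3


section Part4
open SimpleGraph Set

lemma contracts_conn2 : ∀ {n : ℕ} {V W : Type} (G : SimpleGraph V) (H : SimpleGraph W),
    ContractsIn G H n → Finite V → ∀ D : Set W, Conn2 H D →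
    ∃ E : Set V, Conn2 G E ∧ Eᶜ.ncard ≤ Dᶜ.ncard + n := by
  intro n V W G H hc
  induction hc with
  | iso hiso =>
    intro _ D hD
    obtain ⟨φ⟩ := hiso
    refine ⟨φ.symm '' D, conn2_of_iso φ.symm hD, ?_⟩
    have himg : (⇑φ.symm '' D)ᶜ = ⇑φ.symm '' (Dᶜ) :=
      (Set.image_compl_eq φ.symm.bijective).symm
    rw [himg, Set.ncard_image_of_injective _ φ.symm.injective]
    omega
  | step u v huv hrec ih =>
    intro hfin D hD
    have hfin' : Finite {x // x ≠ v} := inferInstance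
    obtain ⟨E', hE', hcard⟩ := ih hfin' D hD
    obtain ⟨E, hE, hcard2⟩ := step_conn2 _ huv E' hE'
    exact ⟨E, hE, by omega⟩

open Fin.NatCast Fin.CommRing in
lemma cycle_del_connected {k : ℕ} (c : Fin (k + 3)) :
    ((cycleGraph (k + 3)).induce {c}ᶜ).Connected := by
  have hne : ∀ j : ℕ, 1 ≤ j → j ≤ k + 2 → c + (j : Fin (k + 3)) ≠ c := by
    intro j h1 h2 hc
    have hj0 : (j : Fin (k + 3)) = 0 := by
      have h' : c + (j : Fin (k + 3)) = c + 0 := by rw [add_zero]; exact hc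
      exact add_left_cancel h'
    have := congrArg Fin.val hj0
    rw [Fin.val_cast_of_lt (by omega)] at this
    simp at this
    omega
  have hmem : ∀ j : ℕ, 1 ≤ j → j ≤ k + 2 → c + (j : Fin (k + 3)) ∈ ({c}ᶜ : Set (Fin (k+3))) := by
    intro j h1 h2
    exact hne j h1 h2
  have h1mem : c + 1 ∈ ({c}ᶜ : Set (Fin (k+3))) := by
    have := hmem 1 le_rfl (by omega)
    rwa [Nat.cast_one] at this
  have key : ∀ j : ℕ, ∀ _h1 : 1 ≤ j, ∀ h2 : j ≤ k + 2,
      ((cycleGraph (k + 3)).induce {c}ᶜ).Reachable ⟨c + 1, h1mem⟩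
        ⟨c + (j : Fin (k + 3)), hmem j _h1 h2⟩ := by
    intro j h1
    induction j, h1 using Nat.le_induction with
    | base =>
      intro _
      have heq : (⟨c + ((1 : ℕ) : Fin (k + 3)), hmem 1 le_rfl (by omega)⟩ :
          ({c}ᶜ : Set (Fin (k+3)))) = ⟨c + 1, h1mem⟩ := by
        apply Subtype.ext
        simp
      rw [heq]
    | succ j hj ih =>
      intro h2
      refine (ih (by omega)).trans (Adj.reachable ?_)
      show (cycleGraph (k + 3)).Adj (c + ((j : ℕ) : Fin (k + 3))) (c + ((j + 1 : ℕ) : Fin (k + 3)))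
      refine (cycleGraph_adj (n := k + 1)).mpr (Or.inr ?_)
      push_cast
      ring
  rw [connected_iff_exists_forall_reachable]
  refine ⟨⟨c + 1, h1mem⟩, ?_⟩
  rintro ⟨x, hx⟩
  have hxc : x ≠ c := hx
  have hsub : x - c ≠ 0 := sub_ne_zero.mpr hxc
  have hj1 : 1 ≤ (x - c).val := by
    rcases Nat.eq_zero_or_pos (x - c).val with h | h
    · exact absurd (Fin.ext (by rw [h]; rfl)) hsub
    · omega
  have hj2 : (x - c).val ≤ k + 2 := by
    have := (x - c).isLt
    omega
  have hxeq : c + (((x - c).val : ℕ) : Fin (k + 3)) = x := by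
    rw [Fin.cast_val_eq_self]
    ring
  have := key (x - c).val hj1 hj2
  have heq : (⟨c + (((x - c).val : ℕ) : Fin (k + 3)), hmem _ hj1 hj2⟩ :
      ({c}ᶜ : Set (Fin (k+3)))) = ⟨x, hx⟩ := Subtype.ext hxeq
  rwa [heq] at this

lemma conn2_cycle (k : ℕ) : Conn2 (cycleGraph (k + 3)) Set.univ := by
  refine ⟨?_, ?_, ?_⟩
  · exact (induceUnivIso (cycleGraph (k + 3))).connected_iff.mpr cycleGraph_connected
  · rw [Set.ncard_univ, Nat.card_eq_fintype_card, Fintype.card_fin]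
    omega
  · intro c _
    have h := cycle_del_connected c
    have : (Set.univ \ {c} : Set (Fin (k+3))) = {c}ᶜ := by
      rw [← Set.compl_eq_univ_diff]
    rw [this]
    exact h

end Part4
end AuxAll

/-- If a connected graph `G` has a block `B` with `|V(B)| ≥ k + 2` and
`|V(G) \ V(B)| ≥ k + 1`, then `G` is not `k`-contractible to a cycle. -/
theorem stmt18 {V : Type} [Finite V] (G : SimpleGraph V) (hconn : G.Connected)
    (k : ℕ) (B : Set V) (hB : IsBlock G B)
    (h1 : k + 2 ≤ Nat.card B) (h2 : k + 1 ≤ Nat.card ↥(Bᶜ)) :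
    ∀ (W : Type) (C : SimpleGraph W), IsCycleGraph C → ¬ KContractible G C k := by
  rintro W C ⟨m, hm3, ⟨φ⟩⟩ ⟨n, hnk, hcontr⟩
  obtain ⟨m', rfl⟩ : ∃ m', m = m' + 3 := ⟨m - 3, by omega⟩
  have hCuniv : Conn2 C Set.univ := by
    have := conn2_of_iso φ.symm (conn2_cycle m')
    have hr : Set.range ⇑φ.symm = Set.univ := Set.range_eq_univ.mpr φ.symm.surjective
    rwa [Set.image_univ, hr] at this
  obtain ⟨E, hE, hcard⟩ := contracts_conn2 G C hcontr inferInstance Set.univ hCuniv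
  rw [Set.compl_univ, Set.ncard_empty] at hcard
  have hBconn2 : Conn2 G B := (conn2_iff G B).mp hB.1
  have hEcompl : k + 1 ≤ Eᶜ.ncard := by
    by_cases hEB : 2 ≤ (E ∩ B).ncard
    · have hunion : Conn2 G (E ∪ B) := conn2_union hE hBconn2 hEB
      have heq := hB.2 (E ∪ B) Set.subset_union_right ((conn2_iff G _).mpr hunion)
      have hEsub : E ⊆ B := by rw [← heq]; exact Set.subset_union_left
      have hcc : Bᶜ ⊆ Eᶜ := Set.compl_subset_compl.mpr hEsub
      have h2' : k + 1 ≤ Bᶜ.ncard := by rwa [Nat.card_coe_set_eq] at h2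
      exact le_trans h2' (Set.ncard_le_ncard hcc (Set.toFinite _))
    · have h1' : k + 2 ≤ B.ncard := by rwa [Nat.card_coe_set_eq] at h1
      rw [Set.inter_comm E B] at hEB
      have hBE : B.ncard ≤ (B \ E).ncard + (B ∩ E).ncard := by
        have h' := Set.ncard_le_ncard_diff_add_ncard B (B ∩ E) (Set.toFinite _)
        rwa [Set.diff_self_inter] at h'
      have hsubc : B \ E ⊆ Eᶜ := fun x hx => hx.2
      have hfin := Set.ncard_le_ncard hsubc (Set.toFinite _)
      omega
  omega
end
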